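/- arXiv:2510.00752 — 10 statements merged into one kernel-verified Lean document; each statement's English description precedes it below -/
import Mathlib

section
/- Let A and B be n×n complex matrices with A positive semidefinite and B Hermitian. Then |tr(AB)| ≤ tr(A·|B|), where |B| denotes the positive semidefinite square root of B² (equivalently of BᴴB). -/
open Matrix
open scoped ComplexOrder

/-- The matrix absolute value `|A| = √(Aᴴ A)`. -/
noncomputable def matAbs {n : Type*} [Fintype n] [DecidableEq n] (A : Matrix n n ℂ) :
    Matrix n n ℂ :=
  (Matrix.posSemidef_conjTranspose_mul_self A).isHermitian.eigenvectorUnitary.1 *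
    diagonal ((↑) ∘ (√·) ∘ (Matrix.posSemidef_conjTranspose_mul_self A).isHermitian.eigenvalues) *
    (star (Matrix.posSemidef_conjTranspose_mul_self A).isHermitian.eigenvectorUnitary : Matrix n n ℂ)

lemma diag_nonneg_of_posSemidef {n : Type*} [Fintype n] [DecidableEq n]
    {M : Matrix n n ℂ} (hM : M.PosSemidef) (i : n) : 0 ≤ M i i := by
  exact hM.diag_nonneg

open scoped MatrixOrder in
lemma matAbs_eq_of_sq_eq {n : Type*} [Fintype n] [DecidableEq n] (A M : Matrix n n ℂ)
    (hM : M.PosSemidef) (h : M ^ 2 = Aᴴ * A) : matAbs A = M := by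
  have hP := posSemidef_conjTranspose_mul_self A
  have h1 : matAbs A = CFC.sqrt (Aᴴ * A) := by
    rw [CFC.sqrt_eq_cfc, cfc_nnreal_eq_real _ _ hP.nonneg, hP.1.cfc_eq]
    simp only [IsHermitian.cfc, Unitary.conjStarAlgAut_apply, matAbs]
    congr 3
    funext i
    simp [Real.coe_sqrt, Real.coe_toNNReal _ (hP.eigenvalues_nonneg i)]
    rw [max_eq_left (hP.eigenvalues_nonneg i)]
  rw [h1]
  exact CFC.sqrt_unique (by rw [← pow_two]; exact h) hM.nonneg

/-- For `A` positive semidefinite and `B` Hermitian, `|tr(AB)| ≤ tr(A|B|)`. -/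
theorem abs_trace_mul_le_trace_mul_matAbs
    {n : Type*} [Fintype n] [DecidableEq n] (A B : Matrix n n ℂ)
    (hA : A.PosSemidef) (hB : B.IsHermitian) :
    ‖(A * B).trace‖ ≤ ((A * matAbs B).trace).re := by
  set U : Matrix n n ℂ := (hB.eigenvectorUnitary : Matrix n n ℂ)
  set lam := hB.eigenvalues
  have hUU : Uᴴ * U = 1 := by
    simpa [star_eq_conjTranspose] using (Matrix.mem_unitaryGroup_iff').mp hB.eigenvectorUnitary.2
  have hspec : B = U * diagonal (fun i => (lam i : ℂ)) * Uᴴ := by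
    have := hB.spectral_theorem
    exact this
  -- absolute value matrix
  have habsPSD : PosSemidef (U * diagonal (fun i => ((|lam i| : ℝ) : ℂ)) * Uᴴ) := by
    refine PosSemidef.mul_mul_conjTranspose_same ?_ U
    exact posSemidef_diagonal_iff.mpr fun i => by positivity
  have hsq : (U * diagonal (fun i => ((|lam i| : ℝ) : ℂ)) * Uᴴ) ^ 2 = Bᴴ * B := by
    rw [hB.eq, pow_two]
    conv_rhs => rw [hspec]
    calc U * diagonal (fun i => ((|lam i| : ℝ) : ℂ)) * Uᴴ * (U * diagonal (fun i => ((|lam i| : ℝ) : ℂ)) * Uᴴ)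
        = U * (diagonal (fun i => ((|lam i| : ℝ) : ℂ)) * (Uᴴ * U) * diagonal (fun i => ((|lam i| : ℝ) : ℂ))) * Uᴴ := by
          simp only [Matrix.mul_assoc]
      _ = U * (diagonal (fun i => (lam i : ℂ)) * (Uᴴ * U) * diagonal (fun i => (lam i : ℂ))) * Uᴴ := by
          rw [hUU]
          simp only [Matrix.mul_one, diagonal_mul_diagonal, ← Complex.ofReal_mul,
            abs_mul_abs_self]
      _ = U * diagonal (fun i => (lam i : ℂ)) * Uᴴ * (U * diagonal (fun i => (lam i : ℂ)) * Uᴴ) := by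
          simp only [Matrix.mul_assoc]
  have habs : matAbs B = U * diagonal (fun i => ((|lam i| : ℝ) : ℂ)) * Uᴴ :=
    matAbs_eq_of_sq_eq B _ habsPSD hsq
  -- traces
  set M := Uᴴ * A * U with hM
  have hMpsd : M.PosSemidef := hA.conjTranspose_mul_mul_same U
  have hdiag : ∀ i, 0 ≤ M i i := diag_nonneg_of_posSemidef hMpsd
  have htr1 : (A * B).trace = ∑ i, M i i * (lam i : ℂ) := by
    conv_lhs => rw [hspec, ← Matrix.mul_assoc, ← Matrix.mul_assoc, trace_mul_cycle]
    rw [hM]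
    simp [Matrix.trace, Matrix.mul_assoc, Matrix.mul_diagonal, Matrix.diag]
  have htr2 : (A * matAbs B).trace = ∑ i, M i i * ((|lam i| : ℝ) : ℂ) := by
    conv_lhs => rw [habs, ← Matrix.mul_assoc, ← Matrix.mul_assoc, trace_mul_cycle]
    rw [hM]
    simp [Matrix.trace, Matrix.mul_assoc, Matrix.mul_diagonal, Matrix.diag]
  rw [htr1, htr2]
  have hMre : ∀ i, M i i = ((M i i).re : ℂ) := by
    intro i
    have h := hdiag i
    rw [Complex.le_def] at h
    exact Complex.ext (by simp) (by simpa using h.2.symm)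
  have hMre_nonneg : ∀ i, 0 ≤ (M i i).re := fun i => by
    have h := hdiag i; rw [Complex.le_def] at h; simpa using h.1
  calc ‖∑ i, M i i * (lam i : ℂ)‖
      ≤ ∑ i, ‖M i i * (lam i : ℂ)‖ := norm_sum_le _ _
    _ = ∑ i, (M i i).re * |lam i| := by
        refine Finset.sum_congr rfl fun i _ => ?_
        rw [hMre i]
        simp [Complex.norm_real, abs_of_nonneg (hMre_nonneg i)]
    _ = (∑ i, M i i * ((|lam i| : ℝ) : ℂ)).re := by
        rw [Complex.re_sum]
        refine Finset.sum_congr rfl fun i _ => ?_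
        rw [hMre i]
        simp
end

section
/- Let α ∈ (0,1) be a constant, let ρ be a density matrix, let ε₁, δ₁ ∈ (0,1), and let p₁ be a real polynomial such that |p₁(x)| ≤ 1 for all x ∈ [−1,1] and |p₁(x) − (δ₁^{1−α}/2)·x^{α−1}| ≤ ε₁ for all x ∈ [δ₁, 1]. Then ‖ρ·p₁(ρ) − (δ₁^{1−α}/2)·ρ^α‖ ≤ (3/2)δ₁ + ε₁, where ‖·‖ denotes the operator norm (largest singular value). -/
open Matrix Polynomial
open scoped ComplexOrder Matrix.Norms.L2Operator

/-- The matrix power `A^β` of a Hermitian matrix, via the spectral decomposition: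
apply `t ↦ t^β` to the eigenvalues, with the convention `0^β = 0`.
(Junk value `0` if `A` is not Hermitian.) -/
noncomputable def matPow {n : Type*} [Fintype n] [DecidableEq n]
    (A : Matrix n n ℂ) (β : ℝ) : Matrix n n ℂ :=
  if hA : A.IsHermitian then hA.cfc (fun x => if x = 0 then 0 else x ^ β) else 0


noncomputable instance matrixCStarAlgebra {n : Type*} [Fintype n] [DecidableEq n] :
    CStarAlgebra (Matrix n n ℂ) :=
  { Matrix.instL2OpNormedRing, Matrix.instCStarRing,
    (Matrix.instL2OpNormedAlgebra : NormedAlgebra ℂ (Matrix n n ℂ)),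
    (inferInstance : StarRing (Matrix n n ℂ)),
    (inferInstance : StarModule ℂ (Matrix n n ℂ)),
    (FiniteDimensional.complete ℂ (Matrix n n ℂ) : CompleteSpace (Matrix n n ℂ)) with }

/-- If `p₁` is bounded by 1 on `[-1,1]` and approximates `(δ₁^{1-α}/2) x^{α-1}` on `[δ₁,1]`
to within `ε₁`, then `‖ρ p₁(ρ) - (δ₁^{1-α}/2) ρ^α‖ ≤ (3/2)δ₁ + ε₁` in operator norm. -/
theorem opNorm_mul_poly_sub_smul_pow_le {n : Type*} [Fintype n] [DecidableEq n]
    (α ε₁ δ₁ : ℝ) (hα : α ∈ Set.Ioo (0 : ℝ) 1)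
    (hε₁ : ε₁ ∈ Set.Ioo (0 : ℝ) 1) (hδ₁ : δ₁ ∈ Set.Ioo (0 : ℝ) 1)
    (ρ : Matrix n n ℂ) (hρ : ρ.PosSemidef) (hρ1 : ρ.trace = 1)
    (p₁ : Polynomial ℝ)
    (hp₁bdd : ∀ x ∈ Set.Icc (-1 : ℝ) 1, |p₁.eval x| ≤ 1)
    (hp₁approx : ∀ x ∈ Set.Icc δ₁ 1, |p₁.eval x - δ₁ ^ (1 - α) / 2 * x ^ (α - 1)| ≤ ε₁) :
    ‖ρ * (Polynomial.aeval ρ p₁) - (δ₁ ^ (1 - α) / 2) • matPow ρ α‖ ≤ (3 / 2) * δ₁ + ε₁ := by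
  obtain ⟨hα0, hα1⟩ := hα
  obtain ⟨hε0, _⟩ := hε₁
  obtain ⟨hδ0, hδ1⟩ := hδ₁
  have hH : ρ.IsHermitian := hρ.1
  have hsa : IsSelfAdjoint ρ := hH
  have hcont : ∀ f : ℝ → ℝ, ContinuousOn f (spectrum ℝ ρ) :=
    fun f => (Matrix.finite_real_spectrum (A := ρ)).continuousOn f
  set c : ℝ := δ₁ ^ (1 - α) / 2 with hc
  have hc0 : 0 ≤ c := by positivity
  -- rewrite as a single cfc
  have h1 : ρ * (Polynomial.aeval ρ p₁) = cfc (fun x : ℝ => x * p₁.eval x) ρ := by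
    rw [cfc_mul _ _ ρ (hcont _) (hcont _), cfc_id' ℝ ρ, cfc_polynomial p₁ ρ hsa]
  have h2 : c • matPow ρ α
      = cfc (fun x : ℝ => c * (if x = 0 then 0 else x ^ α)) ρ := by
    rw [matPow, dif_pos hH, ← Matrix.IsHermitian.cfc_eq,
      cfc_const_mul _ _ ρ (hcont _)]
  rw [h1, h2, ← cfc_sub _ _ ρ (hcont _) (hcont _)]
  have htr : ∑ i, hH.eigenvalues i = 1 := by
    have h : ρ.trace = ∑ i, (hH.eigenvalues i : ℂ) := by
      conv_lhs => rw [hH.spectral_theorem]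
      rw [Unitary.conjStarAlgAut_apply, Matrix.trace_mul_cycle]
      simp [Matrix.trace_diagonal, Function.comp]
    rw [hρ1] at h
    exact_mod_cast h.symm
  have hspec : ∀ x ∈ spectrum ℝ ρ, 0 ≤ x ∧ x ≤ 1 := by
    intro x hx
    obtain ⟨i, rfl⟩ := hH.spectrum_real_eq_range_eigenvalues ▸ hx
    refine ⟨hρ.eigenvalues_nonneg i, ?_⟩
    calc hH.eigenvalues i ≤ ∑ j, hH.eigenvalues j :=
          Finset.single_le_sum (fun j _ => hρ.eigenvalues_nonneg j) (Finset.mem_univ i)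
      _ = 1 := htr
  refine norm_cfc_le (by positivity) fun x hx => ?_
  obtain ⟨hx0, hx1⟩ := hspec x hx
  rw [Real.norm_eq_abs]
  rcases le_or_gt δ₁ x with hxd | hxd
  · have hxpos : 0 < x := lt_of_lt_of_le hδ0 hxd
    rw [if_neg hxpos.ne']
    have hxa : x ^ α = x ^ (α - 1) * x := by
      rw [← Real.rpow_add_one hxpos.ne' (α - 1), sub_add_cancel]
    have heq : x * p₁.eval x - c * x ^ α = x * (p₁.eval x - c * x ^ (α - 1)) := by
      rw [hxa]; ring
    rw [heq, abs_mul, abs_of_nonneg hx0]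
    calc x * |p₁.eval x - c * x ^ (α - 1)| ≤ 1 * ε₁ :=
          mul_le_mul hx1 (hp₁approx x ⟨hxd, hx1⟩) (abs_nonneg _) zero_le_one
      _ ≤ 3 / 2 * δ₁ + ε₁ := by nlinarith
  · have h3 : |x * p₁.eval x| ≤ δ₁ := by
      rw [abs_mul, abs_of_nonneg hx0]
      calc x * |p₁.eval x| ≤ x * 1 :=
            mul_le_mul_of_nonneg_left (hp₁bdd x ⟨by linarith, hx1⟩) hx0
        _ ≤ δ₁ := by linarith
    have h4 : |c * (if x = 0 then 0 else x ^ α)| ≤ δ₁ / 2 := by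
      split_ifs with h
      · simp; positivity
      · rw [abs_mul, abs_of_nonneg hc0, abs_of_nonneg (Real.rpow_nonneg hx0 α)]
        calc c * x ^ α ≤ c * δ₁ ^ α :=
              mul_le_mul_of_nonneg_left (Real.rpow_le_rpow hx0 hxd.le hα0.le) hc0
          _ = δ₁ / 2 := by
              rw [hc, div_mul_eq_mul_div, ← Real.rpow_add hδ0]
              norm_num
    calc |x * p₁.eval x - c * (if x = 0 then 0 else x ^ α)| ≤ δ₁ + δ₁ / 2 :=
          (abs_sub _ _).trans (add_le_add h3 h4)
      _ ≤ 3 / 2 * δ₁ + ε₁ := by linarith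
end

section
/- Let α ∈ (0,1) be a constant, let r be a positive integer, let ρ and σ be r×r density matrices, let ε₁, δ₁, ε₂ ∈ (0,1), let p₁ be a real polynomial with |p₁(x)| ≤ 1 for all x ∈ [−1,1] and |p₁(x) − (δ₁^{1−α}/2)·x^{α−1}| ≤ ε₁ for all x ∈ [δ₁,1], and let p₂ be a real polynomial with |p₂(x)| ≤ 1 for all x ∈ [−1,1] and |p₂(x) − (1/2)x^{1−α}| ≤ ε₂ for all x ∈ [0,1]. Then |tr(ρ·p₁(ρ)·p₂(σ)) − (δ₁^{1−α}/2)·tr(ρ^α·p₂(σ))| ≤ (r·ε₂ + r^α/2)·((3/2)δ₁ + ε₁). -/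
open Matrix Polynomial
open scoped ComplexOrder

/-- Conjugation by a unitary matrix as an `ℝ`-algebra homomorphism. -/
noncomputable def unitaryConjAlgHom {n : Type*} [Fintype n] [DecidableEq n]
    (U : Matrix.unitaryGroup n ℂ) : Matrix n n ℂ →ₐ[ℝ] Matrix n n ℂ where
  toFun A := (U : Matrix n n ℂ) * A * star (U : Matrix n n ℂ)
  map_one' := by simpa using U.2.2
  map_mul' A B := by
    have h : star (U : Matrix n n ℂ) * (U : Matrix n n ℂ) = 1 := U.2.1
    calc (U : Matrix n n ℂ) * (A * B) * star (U : Matrix n n ℂ)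
        = (U : Matrix n n ℂ) * (A * (star (U : Matrix n n ℂ) * (U : Matrix n n ℂ)) * B)
            * star (U : Matrix n n ℂ) := by rw [h]; rw [Matrix.mul_one]
      _ = (U : Matrix n n ℂ) * A * star (U : Matrix n n ℂ)
            * ((U : Matrix n n ℂ) * B * star (U : Matrix n n ℂ)) := by
          simp only [Matrix.mul_assoc]
  map_zero' := by simp
  map_add' A B := by simp [Matrix.mul_add, Matrix.add_mul]
  commutes' r := by
    have h : (U : Matrix n n ℂ) * star (U : Matrix n n ℂ) = 1 := U.2.2
    simp [Algebra.algebraMap_eq_smul_one, mul_smul_comm, smul_mul_assoc, h]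

lemma aeval_unitary_conj_diag {n : Type*} [Fintype n] [DecidableEq n]
    (U : Matrix.unitaryGroup n ℂ) (d : n → ℝ) (q : ℝ[X]) :
    aeval ((U : Matrix n n ℂ) * Matrix.diagonal (fun i => (d i : ℂ)) * star (U : Matrix n n ℂ)) q
      = (U : Matrix n n ℂ) * Matrix.diagonal (fun i => ((q.eval (d i) : ℝ) : ℂ))
          * star (U : Matrix n n ℂ) := by
  have h1 : (U : Matrix n n ℂ) * Matrix.diagonal (fun i => (d i : ℂ)) * star (U : Matrix n n ℂ)
      = unitaryConjAlgHom U ((Matrix.diagonalAlgHom ℝ) (fun i => (d i : ℂ))) := rfl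
  rw [h1, Polynomial.aeval_algHom_apply, Polynomial.aeval_algHom_apply]
  have h2 : aeval (fun i => (d i : ℂ)) q = fun i => ((q.eval (d i) : ℝ) : ℂ) := by
    funext i
    have h3 := (Polynomial.aeval_algHom_apply (Pi.evalAlgHom ℝ (fun _ : n => ℂ) i)
      (fun i => (d i : ℂ)) q).symm
    have h4 : ((Pi.evalAlgHom ℝ (fun _ : n => ℂ) i) fun i => (d i : ℂ)) = ((d i : ℝ) : ℂ) := rfl
    rw [h4] at h3
    have h5 : ((d i : ℝ) : ℂ) = algebraMap ℝ ℂ (d i) := rfl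
    calc (aeval fun i => (d i : ℂ)) q i = aeval ((d i : ℝ) : ℂ) q := h3
      _ = ((q.eval (d i) : ℝ) : ℂ) := by
          rw [h5, Polynomial.aeval_algebraMap_apply_eq_algebraMap_eval]; rfl
  rw [h2]
  rfl

lemma trace_conj_diag_mul {n : Type*} [Fintype n] [DecidableEq n]
    (U V : Matrix.unitaryGroup n ℂ) (a b : n → ℂ) :
    (((U : Matrix n n ℂ) * Matrix.diagonal a * star (U : Matrix n n ℂ)) *
      ((V : Matrix n n ℂ) * Matrix.diagonal b * star (V : Matrix n n ℂ))).trace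
    = ∑ i, ∑ j, a i * b j *
        ((star (U : Matrix n n ℂ) * (V : Matrix n n ℂ)) i j *
          (starRingEnd ℂ) ((star (U : Matrix n n ℂ) * (V : Matrix n n ℂ)) i j)) := by
  set u : Matrix n n ℂ := (U : Matrix n n ℂ)
  set v : Matrix n n ℂ := (V : Matrix n n ℂ)
  set W : Matrix n n ℂ := star u * v with hW
  have h1 : (u * Matrix.diagonal a * star u) * (v * Matrix.diagonal b * star v)
      = u * (Matrix.diagonal a * W * Matrix.diagonal b * star W) * star u := by
    have hsW : star W = star v * u := by rw [hW, Matrix.star_mul]; simp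
    have h3 : u * star u = 1 := U.2.2
    rw [hsW, hW]
    simp only [Matrix.mul_assoc]
    rw [h3, Matrix.mul_one]
  rw [h1, Matrix.trace_mul_cycle, ← Matrix.mul_assoc]
  have h2 : star u * u = 1 := U.2.1
  rw [h2, Matrix.one_mul]
  rw [Matrix.trace]
  refine Finset.sum_congr rfl fun i _ => ?_
  rw [Matrix.diag_apply, Matrix.mul_apply]
  refine Finset.sum_congr rfl fun j _ => ?_
  rw [Matrix.mul_diagonal, Matrix.diagonal_mul, Matrix.star_apply, Complex.star_def]
  ring

lemma sum_normSq_col {n : Type*} [Fintype n] [DecidableEq n]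
    (U V : Matrix.unitaryGroup n ℂ) (j : n) :
    ∑ i, Complex.normSq ((star (U : Matrix n n ℂ) * (V : Matrix n n ℂ)) i j) = 1 := by
  set u : Matrix n n ℂ := (U : Matrix n n ℂ)
  set v : Matrix n n ℂ := (V : Matrix n n ℂ)
  set W : Matrix n n ℂ := star u * v with hW
  have h1 : star W * W = 1 := by
    rw [hW, Matrix.star_mul, star_star, Matrix.mul_assoc, ← Matrix.mul_assoc u (star u) v,
      U.2.2, Matrix.one_mul, V.2.1]
  have h2 : (star W * W) j j = 1 := by rw [h1]; simp
  rw [Matrix.mul_apply] at h2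
  have h3 : ∀ i, (star W) j i * W i j = ((Complex.normSq (W i j) : ℝ) : ℂ) := by
    intro i
    rw [Matrix.star_apply, Complex.star_def, Complex.normSq_eq_conj_mul_self]
  rw [Finset.sum_congr rfl fun i _ => h3 i] at h2
  rw [← Complex.ofReal_sum] at h2
  exact_mod_cast h2

/-- `|tr(ρ p₁(ρ) p₂(σ)) - (δ₁^{1-α}/2) tr(ρ^α p₂(σ))| ≤ (r ε₂ + r^α/2)((3/2)δ₁ + ε₁)`. -/
theorem abs_trace_poly_approx_le {r : ℕ} (hr : 0 < r)
    (α ε₁ δ₁ ε₂ : ℝ) (hα : α ∈ Set.Ioo (0 : ℝ) 1)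
    (hε₁ : ε₁ ∈ Set.Ioo (0 : ℝ) 1) (hδ₁ : δ₁ ∈ Set.Ioo (0 : ℝ) 1)
    (hε₂ : ε₂ ∈ Set.Ioo (0 : ℝ) 1)
    (ρ σ : Matrix (Fin r) (Fin r) ℂ)
    (hρ : ρ.PosSemidef) (hρ1 : ρ.trace = 1)
    (hσ : σ.PosSemidef) (hσ1 : σ.trace = 1)
    (p₁ p₂ : Polynomial ℝ)
    (hp₁bdd : ∀ x ∈ Set.Icc (-1 : ℝ) 1, |p₁.eval x| ≤ 1)
    (hp₁approx : ∀ x ∈ Set.Icc δ₁ 1, |p₁.eval x - δ₁ ^ (1 - α) / 2 * x ^ (α - 1)| ≤ ε₁)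
    (hp₂bdd : ∀ x ∈ Set.Icc (-1 : ℝ) 1, |p₂.eval x| ≤ 1)
    (hp₂approx : ∀ x ∈ Set.Icc (0 : ℝ) 1, |p₂.eval x - (1 / 2) * x ^ (1 - α)| ≤ ε₂) :
    ‖(ρ * Polynomial.aeval ρ p₁ * Polynomial.aeval σ p₂).trace
        - ((δ₁ ^ (1 - α) / 2 : ℝ) : ℂ) * (matPow ρ α * Polynomial.aeval σ p₂).trace‖
      ≤ ((r : ℝ) * ε₂ + (r : ℝ) ^ α / 2) * ((3 / 2) * δ₁ + ε₁) := by
  obtain ⟨hα0, hα1⟩ := hα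
  obtain ⟨hε₁0, hε₁1⟩ := hε₁
  obtain ⟨hδ₁0, hδ₁1⟩ := hδ₁
  obtain ⟨hε₂0, hε₂1⟩ := hε₂
  have hρH : ρ.IsHermitian := hρ.1
  have hσH : σ.IsHermitian := hσ.1
  set c : ℝ := δ₁ ^ (1 - α) / 2 with hc
  set lam : Fin r → ℝ := hρH.eigenvalues with hlam
  set mu : Fin r → ℝ := hσH.eigenvalues with hmu
  set U := hρH.eigenvectorUnitary with hU
  set V := hσH.eigenvectorUnitary with hV
  set F : ℝ → ℝ := fun t => t * p₁.eval t - c * (if t = 0 then 0 else t ^ α) with hF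
  set G : ℝ → ℝ := fun t => p₂.eval t with hG
  set W : Matrix (Fin r) (Fin r) ℂ := star (U : Matrix (Fin r) (Fin r) ℂ) * V with hWdef
  -- eigenvalue facts
  have hlam_nonneg : ∀ i, 0 ≤ lam i := fun i => hρ.eigenvalues_nonneg i
  have hmu_nonneg : ∀ i, 0 ≤ mu i := fun i => hσ.eigenvalues_nonneg i
  have trace_eig : ∀ (A : Matrix (Fin r) (Fin r) ℂ) (hA : A.IsHermitian), A.trace
      = ((∑ i, hA.eigenvalues i : ℝ) : ℂ) := by
    intro A hA
    conv_lhs => rw [hA.spectral_theorem, Unitary.conjStarAlgAut_apply]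
    rw [Matrix.trace_mul_cycle, hA.eigenvectorUnitary.2.1, Matrix.one_mul,
      Matrix.trace_diagonal, Complex.ofReal_sum]
    rfl
  have hsumlam : ∑ i, lam i = 1 := by
    have h := trace_eig ρ hρH
    rw [hρ1] at h
    exact_mod_cast h.symm
  have hsummu : ∑ i, mu i = 1 := by
    have h := trace_eig σ hσH
    rw [hσ1] at h
    exact_mod_cast h.symm
  have hlam1 : ∀ i, lam i ≤ 1 := by
    intro i
    rw [← hsumlam]
    exact Finset.single_le_sum (fun j _ => hlam_nonneg j) (Finset.mem_univ i)
  have hmu1 : ∀ i, mu i ≤ 1 := by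
    intro i
    rw [← hsummu]
    exact Finset.single_le_sum (fun j _ => hmu_nonneg j) (Finset.mem_univ i)
  -- spectral decompositions
  have hρdec : ρ = (U : Matrix (Fin r) (Fin r) ℂ) * Matrix.diagonal (fun i => ((lam i : ℝ) : ℂ))
      * star (U : Matrix (Fin r) (Fin r) ℂ) := hρH.spectral_theorem
  have hσdec : σ = (V : Matrix (Fin r) (Fin r) ℂ) * Matrix.diagonal (fun i => ((mu i : ℝ) : ℂ))
      * star (V : Matrix (Fin r) (Fin r) ℂ) := hσH.spectral_theorem
  -- the two matrices
  have hBmat : aeval σ p₂ = (V : Matrix (Fin r) (Fin r) ℂ)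
      * Matrix.diagonal (fun j => ((G (mu j) : ℝ) : ℂ)) * star (V : Matrix (Fin r) (Fin r) ℂ) := by
    rw [hσdec]
    exact aeval_unitary_conj_diag V mu p₂
  have hAmat : ρ * aeval ρ p₁ - ((c : ℝ) : ℂ) • matPow ρ α
      = (U : Matrix (Fin r) (Fin r) ℂ) * Matrix.diagonal (fun i => ((F (lam i) : ℝ) : ℂ))
        * star (U : Matrix (Fin r) (Fin r) ℂ) := by
    have h1 : ρ * aeval ρ p₁ = aeval ρ (X * p₁) := by rw [_root_.map_mul, aeval_X]
    have h2 : aeval ρ (X * p₁) = (U : Matrix (Fin r) (Fin r) ℂ)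
        * Matrix.diagonal (fun i => (((X * p₁).eval (lam i) : ℝ) : ℂ))
        * star (U : Matrix (Fin r) (Fin r) ℂ) := by
      conv_lhs => rw [hρdec]
      exact aeval_unitary_conj_diag U lam (X * p₁)
    have h3 : matPow ρ α = (U : Matrix (Fin r) (Fin r) ℂ)
        * Matrix.diagonal (fun i => ((if lam i = 0 then (0 : ℝ) else lam i ^ α : ℝ) : ℂ))
        * star (U : Matrix (Fin r) (Fin r) ℂ) := by
      rw [matPow, dif_pos hρH]
      rfl
    have hD : Matrix.diagonal (fun i => (((X * p₁).eval (lam i) : ℝ) : ℂ))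
        - ((c : ℝ) : ℂ) • Matrix.diagonal (fun i => ((if lam i = 0 then (0 : ℝ) else lam i ^ α : ℝ) : ℂ))
        = Matrix.diagonal (fun i => ((F (lam i) : ℝ) : ℂ)) := by
      ext i j
      rcases eq_or_ne i j with rfl | hij
      · simp only [Matrix.sub_apply, Matrix.smul_apply, Matrix.diagonal_apply_eq, hF, eval_mul,
          eval_X, smul_eq_mul]
        split_ifs with h <;> push_cast <;> ring
      · simp [Matrix.diagonal_apply_ne _ hij]
    have hsplit : (U : Matrix (Fin r) (Fin r) ℂ)
        * (Matrix.diagonal (fun i => (((X * p₁).eval (lam i) : ℝ) : ℂ))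
          - ((c : ℝ) : ℂ) • Matrix.diagonal (fun i => ((if lam i = 0 then (0 : ℝ) else lam i ^ α : ℝ) : ℂ)))
        * star (U : Matrix (Fin r) (Fin r) ℂ)
        = (U : Matrix (Fin r) (Fin r) ℂ)
            * Matrix.diagonal (fun i => (((X * p₁).eval (lam i) : ℝ) : ℂ))
            * star (U : Matrix (Fin r) (Fin r) ℂ)
          - ((c : ℝ) : ℂ) • ((U : Matrix (Fin r) (Fin r) ℂ)
            * Matrix.diagonal (fun i => ((if lam i = 0 then (0 : ℝ) else lam i ^ α : ℝ) : ℂ))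
            * star (U : Matrix (Fin r) (Fin r) ℂ)) := by
      rw [Matrix.mul_sub, Matrix.sub_mul, Matrix.mul_smul, Matrix.smul_mul]
    rw [h1, h2, h3, ← hsplit, hD]
  -- rewrite the trace difference
  have key : (ρ * aeval ρ p₁ * aeval σ p₂).trace
      - ((c : ℝ) : ℂ) * (matPow ρ α * aeval σ p₂).trace
      = ∑ i, ∑ j, ((F (lam i) : ℝ) : ℂ) * ((G (mu j) : ℝ) : ℂ)
          * (W i j * (starRingEnd ℂ) (W i j)) := by
    have h1 : (ρ * aeval ρ p₁ * aeval σ p₂).trace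
        - ((c : ℝ) : ℂ) * (matPow ρ α * aeval σ p₂).trace
        = ((ρ * aeval ρ p₁ - ((c : ℝ) : ℂ) • matPow ρ α) * aeval σ p₂).trace := by
      rw [Matrix.sub_mul, Matrix.trace_sub, Matrix.smul_mul, Matrix.trace_smul]
      simp [smul_eq_mul]
    rw [h1, hAmat, hBmat, trace_conj_diag_mul]
  rw [key]
  -- turn into a real sum
  have hreal : ∑ i, ∑ j, ((F (lam i) : ℝ) : ℂ) * ((G (mu j) : ℝ) : ℂ)
        * (W i j * (starRingEnd ℂ) (W i j))
      = (((∑ i, ∑ j, F (lam i) * G (mu j) * Complex.normSq (W i j)) : ℝ) : ℂ) := by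
    rw [Complex.ofReal_sum]
    refine Finset.sum_congr rfl fun i _ => ?_
    rw [Complex.ofReal_sum]
    refine Finset.sum_congr rfl fun j _ => ?_
    rw [Complex.mul_conj]
    push_cast
    ring
  rw [hreal, Complex.norm_real, Real.norm_eq_abs]
  -- scalar bounds
  have hFbd : ∀ i, |F (lam i)| ≤ (3 / 2) * δ₁ + ε₁ := by
    intro i
    set t : ℝ := lam i with ht
    have ht0 : 0 ≤ t := hlam_nonneg i
    have ht1 : t ≤ 1 := hlam1 i
    have hite : (if t = 0 then (0 : ℝ) else t ^ α) = t ^ α := by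
      split_ifs with h
      · rw [h, Real.zero_rpow (ne_of_gt hα0)]
      · rfl
    have hFt : F t = t * p₁.eval t - c * t ^ α := by rw [hF]; simp only [hite]
    have hcpos : 0 ≤ c := by rw [hc]; positivity
    by_cases hδ : δ₁ ≤ t
    · have htpos : 0 < t := lt_of_lt_of_le hδ₁0 hδ
      have hx := hp₁approx t ⟨hδ, ht1⟩
      have hsplit : t * p₁.eval t - c * t ^ α = t * (p₁.eval t - c * t ^ (α - 1)) := by
        rw [mul_sub]
        congr 1
        have h : t ^ α = t * t ^ (α - 1) := by
          have h' := Real.rpow_add htpos 1 (α - 1)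
          rw [show (1 : ℝ) + (α - 1) = α by ring, Real.rpow_one] at h'
          exact h'
        rw [h]; ring
      rw [hFt, hsplit, abs_mul, abs_of_nonneg ht0]
      have h2 : t * |p₁.eval t - c * t ^ (α - 1)| ≤ 1 * ε₁ :=
        mul_le_mul ht1 hx (abs_nonneg _) zero_le_one
      linarith
    · push_neg at hδ
      have h1 : |t * p₁.eval t| ≤ δ₁ := by
        rw [abs_mul, abs_of_nonneg ht0]
        have := hp₁bdd t ⟨by linarith, ht1⟩
        calc t * |p₁.eval t| ≤ t * 1 := mul_le_mul_of_nonneg_left this ht0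
          _ = t := mul_one t
          _ ≤ δ₁ := le_of_lt hδ
      have h2 : |c * t ^ α| ≤ δ₁ / 2 := by
        rw [abs_mul, abs_of_nonneg hcpos, abs_of_nonneg (Real.rpow_nonneg ht0 α)]
        have h3 : t ^ α ≤ δ₁ ^ α := Real.rpow_le_rpow ht0 (le_of_lt hδ) (le_of_lt hα0)
        have h4 : c * t ^ α ≤ c * δ₁ ^ α := mul_le_mul_of_nonneg_left h3 hcpos
        have h5 : c * δ₁ ^ α = δ₁ / 2 := by
          rw [hc, div_mul_eq_mul_div, ← Real.rpow_add hδ₁0]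
          norm_num
        linarith
      rw [hFt]
      calc |t * p₁.eval t - c * t ^ α| ≤ |t * p₁.eval t| + |c * t ^ α| := abs_sub _ _
        _ ≤ δ₁ + δ₁ / 2 := add_le_add h1 h2
        _ ≤ (3 / 2) * δ₁ + ε₁ := by linarith
  have hGbd : ∀ j, |G (mu j)| ≤ ε₂ + 1 / 2 * (mu j) ^ (1 - α) := by
    intro j
    have h1 := hp₂approx (mu j) ⟨hmu_nonneg j, hmu1 j⟩
    have h2 : 0 ≤ (mu j) ^ (1 - α) := Real.rpow_nonneg (hmu_nonneg j) _
    rw [hG]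
    simp only []
    calc |p₂.eval (mu j)|
        ≤ |p₂.eval (mu j) - 1 / 2 * (mu j) ^ (1 - α)| + |1 / 2 * (mu j) ^ (1 - α)| := by
          have := abs_sub_abs_le_abs_sub (p₂.eval (mu j)) (1 / 2 * (mu j) ^ (1 - α))
          have h3 := abs_nonneg (1 / 2 * (mu j) ^ (1 - α))
          calc |p₂.eval (mu j)|
              = |p₂.eval (mu j) - 1 / 2 * (mu j) ^ (1 - α) + 1 / 2 * (mu j) ^ (1 - α)| := by
                ring_nf
            _ ≤ |p₂.eval (mu j) - 1 / 2 * (mu j) ^ (1 - α)| + |1 / 2 * (mu j) ^ (1 - α)| :=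
                abs_add_le _ _
      _ ≤ ε₂ + 1 / 2 * (mu j) ^ (1 - α) := by
          rw [abs_of_nonneg (by linarith : (0:ℝ) ≤ 1 / 2 * (mu j) ^ (1 - α))]
          exact add_le_add_left h1 _
  have hsum_mu_pow : ∑ j, (mu j) ^ (1 - α) ≤ (r : ℝ) ^ α := by
    have hrpos : (0 : ℝ) < r := Nat.cast_pos.mpr hr
    have hcon : ConcaveOn ℝ (Set.Ici 0) fun x : ℝ => x ^ (1 - α) :=
      Real.concaveOn_rpow (by linarith) (by linarith)
    have hjensen := hcon.le_map_sum (t := Finset.univ) (w := fun _ : Fin r => 1 / (r : ℝ))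
      (p := mu) (fun _ _ => by positivity)
      (by rw [Finset.sum_const, Finset.card_univ, Fintype.card_fin, nsmul_eq_mul]; field_simp)
      (fun i _ => Set.mem_Ici.mpr (hmu_nonneg i))
    have hs : ∑ i, (1 / (r : ℝ)) • mu i = 1 / (r : ℝ) := by
      rw [← Finset.smul_sum, hsummu, smul_eq_mul, mul_one]
    rw [hs] at hjensen
    have h1 : (1 / (r : ℝ)) ^ (1 - α) = (r : ℝ) ^ (α - 1) := by
      rw [one_div, Real.inv_rpow (le_of_lt hrpos), ← Real.rpow_neg (le_of_lt hrpos)]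
      congr 1
      ring
    have h2 : ∑ i, (1 / (r : ℝ)) • (mu i ^ (1 - α)) = (1 / (r : ℝ)) * ∑ i, mu i ^ (1 - α) := by
      rw [← Finset.smul_sum, smul_eq_mul]
    rw [h2, h1] at hjensen
    have h3 : (r : ℝ) ^ α = (r : ℝ) * (r : ℝ) ^ (α - 1) := by
      have h := Real.rpow_add hrpos 1 (α - 1)
      rw [show (1 : ℝ) + (α - 1) = α by ring, Real.rpow_one] at h
      exact h
    have h4 := mul_le_mul_of_nonneg_left hjensen (le_of_lt hrpos)
    have h5 : (r : ℝ) * (1 / (r : ℝ) * ∑ i, mu i ^ (1 - α)) = ∑ i, mu i ^ (1 - α) := by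
      field_simp
    rw [h5] at h4
    rw [h3]
    exact h4
  have hsumG : ∑ j, |G (mu j)| ≤ (r : ℝ) * ε₂ + (r : ℝ) ^ α / 2 := by
    calc ∑ j, |G (mu j)| ≤ ∑ j : Fin r, (ε₂ + 1 / 2 * (mu j) ^ (1 - α)) :=
          Finset.sum_le_sum fun j _ => hGbd j
      _ = (r : ℝ) * ε₂ + 1 / 2 * ∑ j, (mu j) ^ (1 - α) := by
          rw [Finset.sum_add_distrib, Finset.sum_const, Finset.card_univ, Fintype.card_fin,
            nsmul_eq_mul, ← Finset.mul_sum]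
      _ ≤ (r : ℝ) * ε₂ + (r : ℝ) ^ α / 2 := by linarith [hsum_mu_pow]
  have hW1 : ∀ j, ∑ i, Complex.normSq (W i j) = 1 := fun j => sum_normSq_col U V j
  set K : ℝ := (3 / 2) * δ₁ + ε₁ with hK
  have hKpos : 0 ≤ K := by rw [hK]; positivity
  calc |∑ i, ∑ j, F (lam i) * G (mu j) * Complex.normSq (W i j)|
      ≤ ∑ i, ∑ j, |F (lam i)| * |G (mu j)| * Complex.normSq (W i j) := by
        refine (Finset.abs_sum_le_sum_abs _ _).trans (Finset.sum_le_sum fun i _ => ?_)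
        refine (Finset.abs_sum_le_sum_abs _ _).trans (Finset.sum_le_sum fun j _ => ?_)
        rw [abs_mul, abs_mul, abs_of_nonneg (Complex.normSq_nonneg _)]
    _ ≤ ∑ i, ∑ j, K * |G (mu j)| * Complex.normSq (W i j) := by
        refine Finset.sum_le_sum fun i _ => Finset.sum_le_sum fun j _ => ?_
        exact mul_le_mul_of_nonneg_right
          (mul_le_mul_of_nonneg_right (hFbd i) (abs_nonneg _)) (Complex.normSq_nonneg _)
    _ = K * ∑ j, |G (mu j)| := by
        rw [Finset.sum_comm, Finset.mul_sum]
        refine Finset.sum_congr rfl fun j _ => ?_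
        rw [← Finset.mul_sum, hW1 j, mul_one]
    _ ≤ K * ((r : ℝ) * ε₂ + (r : ℝ) ^ α / 2) := by
        exact mul_le_mul_of_nonneg_left hsumG hKpos
    _ = ((r : ℝ) * ε₂ + (r : ℝ) ^ α / 2) * K := mul_comm _ _
end

section
/- Let α ∈ (0,1) be a constant, let ρ and σ be density matrices of the same size, each of rank at most r, let δ₁, ε₂ ∈ (0,1), and let p₂ be a real polynomial with |p₂(x)| ≤ 1 for all x ∈ [−1,1] and |p₂(x) − (1/2)x^{1−α}| ≤ ε₂ for all x ∈ [0,1]. Then |(δ₁^{1−α}/2)·tr(ρ^α·p₂(σ)) − (δ₁^{1−α}/4)·tr(ρ^α·σ^{1−α})| ≤ (δ₁^{1−α}/2^α)·r^{1−α}·ε₂. -/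
open Matrix Polynomial
open scoped ComplexOrder

namespace MyAux
variable {n : Type*} [Fintype n] [DecidableEq n] {A : Matrix n n ℂ}

lemma trace_nonneg_of_posSemidef {M : Matrix n n ℂ} (hM : M.PosSemidef) : 0 ≤ M.trace := by
  rw [Matrix.trace]
  refine Finset.sum_nonneg fun i _ => ?_
  exact hM.diag_nonneg

lemma trace_mul_nonneg {A B : Matrix n n ℂ} (hA : A.PosSemidef) (hB : B.PosSemidef) :
    0 ≤ (A * B).trace := by
  open scoped MatrixOrder in
  obtain ⟨X, rfl⟩ := CStarAlgebra.nonneg_iff_eq_star_mul_self.mp hA.nonneg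
  rw [mul_assoc, Matrix.trace_mul_comm]
  exact trace_nonneg_of_posSemidef (hB.mul_mul_conjTranspose_same _)

lemma star_mul_self_eigen (hA : A.IsHermitian) :
    star (hA.eigenvectorUnitary : Matrix n n ℂ) * (hA.eigenvectorUnitary : Matrix n n ℂ) = 1 :=
  Unitary.star_mul_self_of_mem (SetLike.coe_mem _)

lemma mul_star_self_eigen (hA : A.IsHermitian) :
    (hA.eigenvectorUnitary : Matrix n n ℂ) * star (hA.eigenvectorUnitary : Matrix n n ℂ) = 1 :=
  Unitary.mul_star_self_of_mem (SetLike.coe_mem _)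

lemma cfc_mul' (hA : A.IsHermitian) (f g : ℝ → ℝ) :
    hA.cfc (fun x => f x * g x) = hA.cfc f * hA.cfc g := by
  simp only [Matrix.IsHermitian.cfc, Unitary.conjStarAlgAut_apply]
  have key : ∀ (a b c d e f : Matrix n n ℂ),
      (a * b * c) * (d * e * f) = a * (b * (c * d) * e) * f := fun a b c d e f => by
    simp only [mul_assoc]
  rw [key, star_mul_self_eigen hA, mul_one, diagonal_mul_diagonal]
  have hd : (diagonal (RCLike.ofReal ∘ (fun x => f x * g x) ∘ hA.eigenvalues) : Matrix n n ℂ)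
      = diagonal (fun i => (RCLike.ofReal ∘ f ∘ hA.eigenvalues) i
          * (RCLike.ofReal ∘ g ∘ hA.eigenvalues) i) := by
    ext i j
    by_cases h : i = j <;> simp [Matrix.diagonal_apply, h]
  rw [hd]

lemma cfc_add' (hA : A.IsHermitian) (f g : ℝ → ℝ) :
    hA.cfc (fun x => f x + g x) = hA.cfc f + hA.cfc g := by
  simp only [Matrix.IsHermitian.cfc, Unitary.conjStarAlgAut_apply]
  have hd : (diagonal (RCLike.ofReal ∘ (fun x => f x + g x) ∘ hA.eigenvalues) : Matrix n n ℂ)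
      = diagonal (RCLike.ofReal ∘ f ∘ hA.eigenvalues)
        + diagonal (RCLike.ofReal ∘ g ∘ hA.eigenvalues) := by
    ext i j
    by_cases h : i = j <;> simp [Matrix.diagonal_apply, Matrix.one_apply, h]
  rw [hd, mul_add, add_mul]

lemma cfc_sub' (hA : A.IsHermitian) (f g : ℝ → ℝ) :
    hA.cfc (fun x => f x - g x) = hA.cfc f - hA.cfc g := by
  simp only [Matrix.IsHermitian.cfc, Unitary.conjStarAlgAut_apply]
  have hd : (diagonal (RCLike.ofReal ∘ (fun x => f x - g x) ∘ hA.eigenvalues) : Matrix n n ℂ)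
      = diagonal (RCLike.ofReal ∘ f ∘ hA.eigenvalues)
        - diagonal (RCLike.ofReal ∘ g ∘ hA.eigenvalues) := by
    ext i j
    by_cases h : i = j <;> simp [Matrix.diagonal_apply, Matrix.one_apply, h]
  rw [hd, mul_sub, sub_mul]

lemma cfc_smul' (hA : A.IsHermitian) (c : ℝ) (f : ℝ → ℝ) :
    hA.cfc (fun x => c * f x) = (c : ℂ) • hA.cfc f := by
  simp only [Matrix.IsHermitian.cfc, Unitary.conjStarAlgAut_apply]
  have hd : (diagonal (RCLike.ofReal ∘ (fun x => c * f x) ∘ hA.eigenvalues) : Matrix n n ℂ)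
      = (c : ℂ) • diagonal (RCLike.ofReal ∘ f ∘ hA.eigenvalues) := by
    ext i j
    by_cases h : i = j <;> simp [Matrix.diagonal_apply, Matrix.one_apply, h]
  rw [hd, mul_smul_comm, smul_mul_assoc]

lemma cfc_const' (hA : A.IsHermitian) (c : ℝ) :
    hA.cfc (fun _ => c) = (c : ℂ) • 1 := by
  simp only [Matrix.IsHermitian.cfc, Unitary.conjStarAlgAut_apply]
  have hd : (diagonal (RCLike.ofReal ∘ (fun _ : ℝ => c) ∘ hA.eigenvalues) : Matrix n n ℂ)
      = (c : ℂ) • 1 := by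
    ext i j
    by_cases h : i = j <;> simp [Matrix.diagonal_apply, Matrix.one_apply, h]
  rw [hd, mul_smul_comm, mul_one, smul_mul_assoc, mul_star_self_eigen hA]

lemma cfc_id'' (hA : A.IsHermitian) : hA.cfc (fun x => x) = A := by
  simp only [Matrix.IsHermitian.cfc]
  exact hA.spectral_theorem.symm

lemma cfc_trace (hA : A.IsHermitian) (f : ℝ → ℝ) :
    (hA.cfc f).trace = ((∑ i, f (hA.eigenvalues i) : ℝ) : ℂ) := by
  simp only [Matrix.IsHermitian.cfc, Unitary.conjStarAlgAut_apply]
  rw [Matrix.trace_mul_cycle, star_mul_self_eigen hA, one_mul, trace_diagonal]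
  push_cast
  rfl

lemma cfc_posSemidef (hA : A.IsHermitian) (f : ℝ → ℝ)
    (h : ∀ i, 0 ≤ f (hA.eigenvalues i)) : (hA.cfc f).PosSemidef := by
  simp only [Matrix.IsHermitian.cfc, Unitary.conjStarAlgAut_apply]
  rw [show star (hA.eigenvectorUnitary : Matrix n n ℂ)
      = (hA.eigenvectorUnitary : Matrix n n ℂ)ᴴ from rfl]
  refine PosSemidef.mul_mul_conjTranspose_same ?_ _
  refine posSemidef_diagonal_iff.mpr fun i => ?_
  have := Complex.zero_le_real.mpr (h i)
  simpa using this

lemma aeval_eq_cfc (hA : A.IsHermitian) (p : ℝ[X]) :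
    Polynomial.aeval A p = hA.cfc (fun x => p.eval x) := by
  induction p using Polynomial.induction_on with
  | C a =>
    rw [aeval_C, show (fun x : ℝ => eval x (C a)) = (fun _ : ℝ => a) from by
      funext x; simp, cfc_const' hA, Algebra.algebraMap_eq_smul_one,
      ← algebraMap_smul ℂ a (1 : Matrix n n ℂ)]
    norm_num
  | add p q hp hq =>
    rw [show (fun x : ℝ => eval x (p + q))
        = (fun x : ℝ => (fun y => eval y p) x + (fun y => eval y q) x) from by
      funext x; simp, cfc_add' hA, map_add, hp, hq]
  | monomial k a ih =>
    have h1 : (C a * X ^ (k + 1) : ℝ[X]) = (C a * X ^ k) * X := by ring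
    rw [h1, _root_.map_mul, ih, aeval_X,
      show (fun x : ℝ => eval x (C a * X ^ k * X))
        = (fun x : ℝ => (fun y => eval y (C a * X ^ k)) x * (fun y : ℝ => y) x) from by
      funext x; simp, cfc_mul' hA, cfc_id'' hA]

lemma sum_rpow_le_card_rpow {ι : Type*} (s : Finset ι) (lam : ι → ℝ) (α : ℝ)
    (hα : 0 < α) (hα1 : α < 1) (h0 : ∀ i ∈ s, 0 ≤ lam i) (hsum : ∑ i ∈ s, lam i ≤ 1) :
    ∑ i ∈ s, lam i ^ α ≤ (s.card : ℝ) ^ (1 - α) := by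
  rcases s.eq_empty_or_nonempty with rfl | hs
  · simp [Real.zero_rpow (by linarith : (1:ℝ) - α ≠ 0)]
  · set c : ℝ := (s.card : ℝ) with hc_def
    have hc : 0 < c := by
      simp only [hc_def]
      exact_mod_cast Finset.card_pos.mpr hs
    have hw' : ∑ _i ∈ s, (1 / c) = 1 := by
      rw [Finset.sum_const, nsmul_eq_mul, ← hc_def]
      field_simp
    have hp : (1:ℝ) ≤ 1 / α := by
      rw [le_div_iff₀ hα]; linarith
    have key := Real.rpow_arith_mean_le_arith_mean_rpow s (fun _ => 1 / c)
      (fun i => lam i ^ α) (fun i _ => by positivity) hw'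
      (fun i hi => Real.rpow_nonneg (h0 i hi) α) hp
    set S : ℝ := ∑ i ∈ s, lam i ^ α with hS_def
    have hS0 : 0 ≤ S := Finset.sum_nonneg fun i hi => Real.rpow_nonneg (h0 i hi) α
    have hL : ∑ i ∈ s, (1 / c) * lam i ^ α = (1/c) * S := by
      rw [hS_def, Finset.mul_sum]
    have hR : ∑ i ∈ s, (1 / c) * (lam i ^ α) ^ (1/α) = (1/c) * ∑ i ∈ s, lam i := by
      rw [Finset.mul_sum]
      refine Finset.sum_congr rfl fun i hi => ?_
      rw [← Real.rpow_mul (h0 i hi), mul_one_div_cancel hα.ne', Real.rpow_one]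
    have key2 : ((1/c) * S) ^ (1/α) ≤ 1/c := by
      calc ((1/c) * S) ^ (1/α) ≤ ∑ i ∈ s, (1 / c) * (lam i ^ α) ^ (1/α) := by
            rw [← hL]; exact key
        _ = (1/c) * ∑ i ∈ s, lam i := hR
        _ ≤ (1/c) * 1 := by
            apply mul_le_mul_of_nonneg_left hsum (by positivity)
        _ = 1/c := mul_one _
    have key3 : (1/c) * S ≤ (1/c) ^ α := by
      have h1 : (((1/c) * S) ^ (1/α)) ^ α ≤ (1/c) ^ α :=
        Real.rpow_le_rpow (Real.rpow_nonneg (by positivity) _) key2 hα.le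
      rwa [← Real.rpow_mul (by positivity), one_div_mul_cancel hα.ne', Real.rpow_one] at h1
    have hfin : S ≤ c * (1/c) ^ α := by
      have := mul_le_mul_of_nonneg_left key3 hc.le
      calc S = c * ((1/c) * S) := by field_simp
        _ ≤ c * (1/c) ^ α := this
    calc S ≤ c * (1/c) ^ α := hfin
      _ = c ^ (1 - α) := by
          rw [one_div, Real.inv_rpow hc.le, Real.rpow_sub hc, Real.rpow_one, div_eq_mul_inv]

end MyAux

/-- `|(δ₁^{1-α}/2) tr(ρ^α p₂(σ)) - (δ₁^{1-α}/4) tr(ρ^α σ^{1-α})| ≤ (δ₁^{1-α}/2^α) r^{1-α} ε₂`. -/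
theorem abs_trace_pow_poly_sub_trace_pow_pow_le
    {n : Type*} [Fintype n] [DecidableEq n] (r : ℕ)
    (α δ₁ ε₂ : ℝ) (hα : α ∈ Set.Ioo (0 : ℝ) 1)
    (hδ₁ : δ₁ ∈ Set.Ioo (0 : ℝ) 1) (hε₂ : ε₂ ∈ Set.Ioo (0 : ℝ) 1)
    (ρ σ : Matrix n n ℂ)
    (hρ : ρ.PosSemidef) (hρ1 : ρ.trace = 1) (hρr : ρ.rank ≤ r)
    (hσ : σ.PosSemidef) (hσ1 : σ.trace = 1) (hσr : σ.rank ≤ r)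
    (p₂ : Polynomial ℝ)
    (hp₂bdd : ∀ x ∈ Set.Icc (-1 : ℝ) 1, |p₂.eval x| ≤ 1)
    (hp₂approx : ∀ x ∈ Set.Icc (0 : ℝ) 1, |p₂.eval x - (1 / 2) * x ^ (1 - α)| ≤ ε₂) :
    ‖(((δ₁ ^ (1 - α) / 2 : ℝ) : ℂ) * (matPow ρ α * Polynomial.aeval σ p₂).trace
        - ((δ₁ ^ (1 - α) / 4 : ℝ) : ℂ) * (matPow ρ α * matPow σ (1 - α)).trace)‖
      ≤ δ₁ ^ (1 - α) / 2 ^ α * (r : ℝ) ^ (1 - α) * ε₂ := by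
  classical
  obtain ⟨hα0, hα1⟩ := hα
  obtain ⟨hδ0, hδ1⟩ := hδ₁
  obtain ⟨hε0, hε1⟩ := hε₂
  have hρh : ρ.IsHermitian := hρ.1
  have hσh : σ.IsHermitian := hσ.1
  set lam : n → ℝ := hρh.eigenvalues with hlam
  set mu : n → ℝ := hσh.eigenvalues with hmu
  have hsumlam : ∑ i, lam i = 1 := by
    have h1 : ρ.trace = ((∑ i, lam i : ℝ) : ℂ) := by
      conv_lhs => rw [← MyAux.cfc_id'' hρh]
      rw [MyAux.cfc_trace]
    rw [hρ1] at h1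
    exact_mod_cast h1.symm
  have hsummu : ∑ i, mu i = 1 := by
    have h1 : σ.trace = ((∑ i, mu i : ℝ) : ℂ) := by
      conv_lhs => rw [← MyAux.cfc_id'' hσh]
      rw [MyAux.cfc_trace]
    rw [hσ1] at h1
    exact_mod_cast h1.symm
  have hmu01 : ∀ i, mu i ∈ Set.Icc (0:ℝ) 1 := fun i =>
    ⟨hσ.eigenvalues_nonneg i, by
      calc mu i ≤ ∑ j, mu j :=
            Finset.single_le_sum (fun j _ => hσ.eigenvalues_nonneg j) (Finset.mem_univ i)
        _ = 1 := hsummu⟩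
  set f₁ : ℝ → ℝ := fun x => if x = 0 then 0 else x ^ α with hf₁
  set h₂ : ℝ → ℝ := fun x => if x = 0 then 0 else x ^ (1 - α) with hh₂
  set g : ℝ → ℝ := fun x => p₂.eval x - (1/2) * h₂ x with hg
  have hXdef : matPow ρ α = hρh.cfc f₁ := dif_pos hρh
  have hXpsd : (matPow ρ α).PosSemidef := by
    rw [hXdef]
    refine MyAux.cfc_posSemidef hρh f₁ fun i => ?_
    simp only [← hlam]
    by_cases h : lam i = 0
    · simp [hf₁, h]
    · simp only [hf₁, if_neg h]
      exact Real.rpow_nonneg (hρ.eigenvalues_nonneg i) α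
  set t : ℝ := ∑ i, f₁ (lam i) with htdef
  have htr : (matPow ρ α).trace = (t : ℂ) := by rw [hXdef, MyAux.cfc_trace]
  have ht0 : 0 ≤ t := by
    refine Finset.sum_nonneg fun i _ => ?_
    by_cases h : lam i = 0
    · simp [hf₁, h]
    · simp only [hf₁, if_neg h]
      exact Real.rpow_nonneg (hρ.eigenvalues_nonneg i) α
  have htle : t ≤ (r : ℝ) ^ (1 - α) := by
    set s : Finset n := Finset.univ.filter (fun i => lam i ≠ 0) with hs
    have h1 : t = ∑ i ∈ s, lam i ^ α := by
      rw [htdef, hs, Finset.sum_filter]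
      refine Finset.sum_congr rfl fun i _ => ?_
      by_cases h : lam i = 0 <;> simp [hf₁, h]
    have hcard : ρ.rank = s.card := by
      rw [hρh.rank_eq_card_non_zero_eigs, Fintype.card_subtype]
    have hcardr : (s.card : ℝ) ≤ (r : ℝ) := by
      exact_mod_cast hcard ▸ hρr
    have hsum_s : ∑ i ∈ s, lam i ≤ 1 := by
      rw [← hsumlam]
      exact Finset.sum_le_sum_of_subset_of_nonneg (Finset.filter_subset _ _)
        (fun i _ _ => hρ.eigenvalues_nonneg i)
    have h2 := MyAux.sum_rpow_le_card_rpow s lam α hα0 hα1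
      (fun i _ => hρ.eigenvalues_nonneg i) hsum_s
    calc t = ∑ i ∈ s, lam i ^ α := h1
      _ ≤ (s.card : ℝ) ^ (1 - α) := h2
      _ ≤ (r : ℝ) ^ (1 - α) :=
          Real.rpow_le_rpow (by positivity) hcardr (by linarith)
  set M : Matrix n n ℂ := hσh.cfc g with hM
  have hsplit : Polynomial.aeval σ p₂ - ((1/2 : ℝ) : ℂ) • matPow σ (1 - α) = M := by
    rw [matPow, dif_pos hσh, MyAux.aeval_eq_cfc hσh, ← MyAux.cfc_smul' hσh (1/2),
      ← MyAux.cfc_sub' hσh]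
  have hgbd : ∀ i, |g (mu i)| ≤ ε₂ := by
    intro i
    by_cases h : mu i = 0
    · have h0 := hp₂approx 0 ⟨le_refl 0, zero_le_one⟩
      rw [Real.zero_rpow (by linarith : (1:ℝ) - α ≠ 0)] at h0
      simp only [hg, hh₂, h, if_pos rfl, mul_zero]
      simpa using h0
    · have h0 := hp₂approx (mu i) (hmu01 i)
      simp only [hg, hh₂, if_neg h]
      exact h0
  have hPpsd : (hσh.cfc (fun x => ε₂ - g x)).PosSemidef := by
    refine MyAux.cfc_posSemidef hσh _ fun i => ?_
    simp only [← hmu]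
    have := abs_le.mp (hgbd i)
    linarith [this.2]
  have hQpsd : (hσh.cfc (fun x => ε₂ + g x)).PosSemidef := by
    refine MyAux.cfc_posSemidef hσh _ fun i => ?_
    simp only [← hmu]
    have := abs_le.mp (hgbd i)
    linarith [this.1]
  have hPeq : hσh.cfc (fun x => ε₂ - g x) = (ε₂ : ℂ) • 1 - M := by
    rw [show (fun x => ε₂ - g x) = (fun x => (fun _ : ℝ => ε₂) x - g x) from rfl,
      MyAux.cfc_sub' hσh, MyAux.cfc_const' hσh]
  have hQeq : hσh.cfc (fun x => ε₂ + g x) = (ε₂ : ℂ) • 1 + M := by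
    rw [show (fun x => ε₂ + g x) = (fun x => (fun _ : ℝ => ε₂) x + g x) from rfl,
      MyAux.cfc_add' hσh, MyAux.cfc_const' hσh]
  set T : ℂ := (matPow ρ α * M).trace with hT
  have h₁ : 0 ≤ (ε₂ : ℂ) * (t : ℂ) - T := by
    have hnn := MyAux.trace_mul_nonneg hXpsd hPpsd
    rw [hPeq] at hnn
    calc (0:ℂ) ≤ (matPow ρ α * ((ε₂ : ℂ) • 1 - M)).trace := hnn
      _ = (ε₂ : ℂ) * (t : ℂ) - T := by
          rw [mul_sub, mul_smul_comm, mul_one, trace_sub, trace_smul, htr, smul_eq_mul]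
  have h₂' : 0 ≤ (ε₂ : ℂ) * (t : ℂ) + T := by
    have hnn := MyAux.trace_mul_nonneg hXpsd hQpsd
    rw [hQeq] at hnn
    calc (0:ℂ) ≤ (matPow ρ α * ((ε₂ : ℂ) • 1 + M)).trace := hnn
      _ = (ε₂ : ℂ) * (t : ℂ) + T := by
          rw [mul_add, mul_smul_comm, mul_one, trace_add, trace_smul, htr, smul_eq_mul]
  have hre1 := (Complex.nonneg_iff.mp h₁).1
  have him1 := (Complex.nonneg_iff.mp h₁).2
  have hre2 := (Complex.nonneg_iff.mp h₂').1
  have hmul : (ε₂ : ℂ) * (t : ℂ) = ((ε₂ * t : ℝ) : ℂ) := by push_cast; ring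
  have hTim : T.im = 0 := by
    have := him1
    rw [hmul] at this
    simpa using this.symm
  have hTre1 : T.re ≤ ε₂ * t := by
    rw [hmul] at hre1
    simpa using hre1
  have hTre2 : -(ε₂ * t) ≤ T.re := by
    rw [hmul] at hre2
    have : 0 ≤ ε₂ * t + T.re := by simpa using hre2
    linarith
  have habsT : ‖T‖ ≤ ε₂ * t := by
    have hTeq : T = ((T.re : ℝ) : ℂ) := Complex.ext rfl (by simp [hTim])
    rw [hTeq, Complex.norm_real, Real.norm_eq_abs, abs_le]
    exact ⟨hTre2, hTre1⟩
  have hTeq2 : ((δ₁ ^ (1 - α) / 2 : ℝ) : ℂ) * (matPow ρ α * Polynomial.aeval σ p₂).trace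
      - ((δ₁ ^ (1 - α) / 4 : ℝ) : ℂ) * (matPow ρ α * matPow σ (1 - α)).trace
      = ((δ₁ ^ (1 - α) / 2 : ℝ) : ℂ) * T := by
    have hA : Polynomial.aeval σ p₂ = M + ((1/2 : ℝ) : ℂ) • matPow σ (1 - α) := by
      rw [← hsplit]; abel
    rw [hT, hA, mul_add, trace_add, mul_smul_comm, trace_smul, smul_eq_mul]
    push_cast
    ring
  rw [hTeq2, norm_mul, Complex.norm_real, Real.norm_eq_abs]
  have hδpos : (0:ℝ) < δ₁ ^ (1 - α) := Real.rpow_pos_of_pos hδ0 _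
  rw [abs_of_pos (by positivity : (0:ℝ) < δ₁ ^ (1 - α) / 2)]
  have h2a : (2:ℝ) ^ α ≤ 2 := by
    calc (2:ℝ) ^ α ≤ (2:ℝ) ^ (1:ℝ) :=
          Real.rpow_le_rpow_of_exponent_le one_le_two hα1.le
      _ = 2 := Real.rpow_one 2
  have hdiv : δ₁ ^ (1 - α) / 2 ≤ δ₁ ^ (1 - α) / 2 ^ α :=
    div_le_div_of_nonneg_left hδpos.le (by positivity) h2a
  calc δ₁ ^ (1 - α) / 2 * ‖T‖
      ≤ δ₁ ^ (1 - α) / 2 * (ε₂ * t) := by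
        apply mul_le_mul_of_nonneg_left habsT (by positivity)
    _ ≤ δ₁ ^ (1 - α) / 2 * (ε₂ * ((r:ℝ) ^ (1 - α))) := by
        apply mul_le_mul_of_nonneg_left _ (by positivity)
        exact mul_le_mul_of_nonneg_left htle hε0.le
    _ ≤ δ₁ ^ (1 - α) / 2 ^ α * (ε₂ * ((r:ℝ) ^ (1 - α))) := by
        apply mul_le_mul_of_nonneg_right hdiv (by positivity)
    _ = δ₁ ^ (1 - α) / 2 ^ α * (r : ℝ) ^ (1 - α) * ε₂ := by ring
end

section
/- Let α ∈ (0,1) be a constant, let ρ be a density matrix, let ε₁, δ₁ ∈ (0,1), and let p₁ be a real polynomial such that |p₁(x)| ≤ 1 for all x ∈ [−1,1] and |p₁(x) − (δ₁^{1−α}/2)·x^{α−1}| ≤ ε₁ for all x ∈ [δ₁, 1]. Then ‖ρ·p₁(ρ/2) − δ₁^{1−α}·(ρ/2)^α‖ ≤ 4δ₁ + ε₁, where ‖·‖ denotes the operator norm (largest singular value). -/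
open Matrix Polynomial
open scoped ComplexOrder Matrix.Norms.L2Operator

noncomputable local instance matCStar {n : Type*} [Fintype n] [DecidableEq n] :
    CStarAlgebra (Matrix n n ℂ) := Matrix.instCStarAlgebra

-- scalar estimate
lemma key_scalar (α ε₁ δ₁ : ℝ) (hα : α ∈ Set.Ioo (0 : ℝ) 1)
    (hε₁ : ε₁ ∈ Set.Ioo (0 : ℝ) 1) (hδ₁ : δ₁ ∈ Set.Ioo (0 : ℝ) 1)
    (p₁ : Polynomial ℝ)
    (hp₁bdd : ∀ x ∈ Set.Icc (-1 : ℝ) 1, |p₁.eval x| ≤ 1)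
    (hp₁approx : ∀ x ∈ Set.Icc δ₁ 1, |p₁.eval x - δ₁ ^ (1 - α) / 2 * x ^ (α - 1)| ≤ ε₁)
    (x : ℝ) (hx0 : 0 ≤ x) (hx2 : x ≤ 1/2) :
    |2 * x * p₁.eval x - δ₁ ^ (1 - α) * (if x = 0 then 0 else x ^ α)| ≤ 4 * δ₁ + ε₁ := by
  obtain ⟨hα0, hα1⟩ := hα
  obtain ⟨hδ0, hδlt⟩ := hδ₁
  obtain ⟨hε0, _⟩ := hε₁
  rcases eq_or_lt_of_le hx0 with h0 | hxpos
  · simp [← h0]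
    positivity
  rw [if_neg hxpos.ne']
  rcases le_or_gt δ₁ x with hge | hlt
  · -- x ≥ δ₁ : use approximation
    have hx1 : x ≤ 1 := hx2.trans (by norm_num)
    have hxa : x ^ α = x * x ^ (α - 1) := by
      rw [show α = 1 + (α - 1) by ring, Real.rpow_add hxpos, Real.rpow_one]
      ring_nf
    have := hp₁approx x ⟨hge, hx1⟩
    have key : 2 * x * p₁.eval x - δ₁ ^ (1 - α) * x ^ α
        = 2 * x * (p₁.eval x - δ₁ ^ (1 - α) / 2 * x ^ (α - 1)) := by
      rw [hxa]; ring
    rw [key, abs_mul]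
    have h2x : |2 * x| ≤ 1 := by rw [abs_of_nonneg (by linarith)]; linarith
    calc |2 * x| * |p₁.eval x - δ₁ ^ (1 - α) / 2 * x ^ (α - 1)| ≤ 1 * ε₁ := by
          apply mul_le_mul h2x this (abs_nonneg _) zero_le_one
      _ ≤ 4 * δ₁ + ε₁ := by linarith
  · -- x < δ₁
    have h1 : |2 * x * p₁.eval x| ≤ 2 * δ₁ := by
      rw [abs_mul, abs_of_nonneg (by linarith : (0:ℝ) ≤ 2 * x)]
      calc 2 * x * |p₁.eval x| ≤ 2 * x * 1 :=
            mul_le_mul_of_nonneg_left (hp₁bdd x ⟨by linarith, by linarith⟩) (by linarith)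
        _ ≤ 2 * δ₁ := by linarith
    have h2 : |δ₁ ^ (1 - α) * x ^ α| ≤ δ₁ := by
      rw [abs_of_nonneg (by positivity)]
      calc δ₁ ^ (1 - α) * x ^ α ≤ δ₁ ^ (1 - α) * δ₁ ^ α := by
            apply mul_le_mul_of_nonneg_left _ (by positivity)
            exact Real.rpow_le_rpow hx0 hlt.le hα0.le
        _ = δ₁ := by
            rw [← Real.rpow_add hδ0]; norm_num
    calc |2 * x * p₁.eval x - δ₁ ^ (1 - α) * x ^ α|
        ≤ |2 * x * p₁.eval x| + |δ₁ ^ (1 - α) * x ^ α| := abs_sub _ _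
      _ ≤ 2 * δ₁ + δ₁ := by linarith
      _ ≤ 4 * δ₁ + ε₁ := by linarith


/-- If `p₁` is bounded by 1 on `[-1,1]` and approximates `(δ₁^{1-α}/2) x^{α-1}` on `[δ₁,1]`
to within `ε₁`, then `‖ρ p₁(ρ/2) - δ₁^{1-α} (ρ/2)^α‖ ≤ 4δ₁ + ε₁` in operator norm. -/
theorem opNorm_mul_poly_half_sub_smul_pow_le {n : Type*} [Fintype n] [DecidableEq n]
    (α ε₁ δ₁ : ℝ) (hα : α ∈ Set.Ioo (0 : ℝ) 1)
    (hε₁ : ε₁ ∈ Set.Ioo (0 : ℝ) 1) (hδ₁ : δ₁ ∈ Set.Ioo (0 : ℝ) 1)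
    (ρ : Matrix n n ℂ) (hρ : ρ.PosSemidef) (hρ1 : ρ.trace = 1)
    (p₁ : Polynomial ℝ)
    (hp₁bdd : ∀ x ∈ Set.Icc (-1 : ℝ) 1, |p₁.eval x| ≤ 1)
    (hp₁approx : ∀ x ∈ Set.Icc δ₁ 1, |p₁.eval x - δ₁ ^ (1 - α) / 2 * x ^ (α - 1)| ≤ ε₁) :
    ‖ρ * Polynomial.aeval ((1 / 2 : ℝ) • ρ) p₁
        - δ₁ ^ (1 - α) • matPow ((1 / 2 : ℝ) • ρ) α‖ ≤ 4 * δ₁ + ε₁ := by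
  set A : Matrix n n ℂ := (1 / 2 : ℝ) • ρ with hAdef
  have hsmul : A = ((1/2 : ℂ)) • ρ := by
    ext i j
    simp [hAdef, Matrix.smul_apply, Complex.real_smul]
  have hApsd : A.PosSemidef := by
    rw [hsmul]
    constructor
    · show _ᴴ = _
      rw [conjTranspose_smul, hρ.1]
      norm_num
    · intro x
      have := hρ.2 x
      have h12 : (0:ℂ) ≤ 1/2 := by
        rw [Complex.le_def]
        norm_num
      exact (hρ.smul h12).2 x
  have hA : A.IsHermitian := hApsd.1
  have hAsa : IsSelfAdjoint A := hA
  -- spectrum is contained in [0, 1/2]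
  have htrace : A.trace = (1/2 : ℂ) := by
    rw [hsmul, trace_smul, hρ1, smul_eq_mul, mul_one]
  have hspec : ∀ x ∈ spectrum ℝ A, 0 ≤ x ∧ x ≤ 1/2 := by
    intro x hx
    obtain ⟨i, rfl⟩ := (hA.spectrum_real_eq_range_eigenvalues ▸ hx : x ∈ Set.range hA.eigenvalues)
    have hnn : ∀ j, 0 ≤ hA.eigenvalues j := hApsd.eigenvalues_nonneg
    refine ⟨hnn i, ?_⟩
    have hsum : ∑ j, hA.eigenvalues j = 1/2 := by
      have h1 : A.trace = ∑ j, (hA.eigenvalues j : ℂ) := by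
        exact hA.trace_eq_sum_eigenvalues
      rw [htrace] at h1
      have := h1.symm
      rw [← Complex.ofReal_sum] at this
      have h2 : ((∑ j, hA.eigenvalues j : ℝ) : ℂ) = ((1/2 : ℝ) : ℂ) := by
        exact this.trans (by norm_num)
      exact_mod_cast h2
    calc hA.eigenvalues i ≤ ∑ j, hA.eigenvalues j :=
          Finset.single_le_sum (fun j _ => hnn j) (Finset.mem_univ i)
      _ = 1/2 := hsum
  -- rewrite as cfc
  have hρeq : ρ = cfc (fun x : ℝ => 2 * x) A := by
    have : cfc (fun x : ℝ => 2 * x) A = (2:ℝ) • A := by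
      rw [← cfc_smul_id (R := ℝ) (2:ℝ) A]
      congr 1
    rw [this, hAdef, smul_smul]
    norm_num
  have haeval : (Polynomial.aeval A p₁ : Matrix n n ℂ) = cfc (fun x : ℝ => p₁.eval x) A :=
    (cfc_polynomial p₁ A).symm
  have hmul : ρ * Polynomial.aeval A p₁ = cfc (fun x : ℝ => 2 * x * p₁.eval x) A := by
    rw [hρeq, haeval, ← cfc_mul _ _ A (Matrix.finite_real_spectrum.continuousOn _)
      (Matrix.finite_real_spectrum.continuousOn _)]
  have hpow : matPow A α = cfc (fun x : ℝ => if x = 0 then 0 else x ^ α) A := by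
    rw [matPow, dif_pos hA, Matrix.IsHermitian.cfc_eq]
  have hsm : δ₁ ^ (1 - α) • matPow A α
      = cfc (fun x : ℝ => δ₁ ^ (1 - α) * (if x = 0 then 0 else x ^ α)) A := by
    rw [hpow, ← cfc_smul (δ₁ ^ (1-α)) _ A (Matrix.finite_real_spectrum.continuousOn _)]
    simp [smul_eq_mul]
  rw [hmul, hsm, ← cfc_sub _ _ A (Matrix.finite_real_spectrum.continuousOn _)
      (Matrix.finite_real_spectrum.continuousOn _)]
  have hb : (0:ℝ) ≤ 4 * δ₁ + ε₁ := by
    obtain ⟨h1, _⟩ := hδ₁; obtain ⟨h2, _⟩ := hε₁; linarith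
  apply norm_cfc_le hb
  intro x hx
  obtain ⟨h0, h2⟩ := hspec x hx
  rw [Real.norm_eq_abs]
  exact key_scalar α ε₁ δ₁ hα hε₁ hδ₁ p₁ hp₁bdd hp₁approx x h0 h2
end

section
/- Let α ∈ (0,1) be a constant, let r be a positive integer, let ρ and σ be r×r density matrices, let ε₁, δ₁, ε₂ ∈ (0,1), let p₁ be a real polynomial with |p₁(x)| ≤ 1 for all x ∈ [−1,1] and |p₁(x) − (δ₁^{1−α}/2)·x^{α−1}| ≤ ε₁ for all x ∈ [δ₁,1], and let p₂ be a real polynomial with |p₂(x)| ≤ 1 for all x ∈ [−1,1] and |p₂(x) − (1/2)x^{1−α}| ≤ ε₂ for all x ∈ [0,1]. Then |tr(ρ·p₁(ρ/2)·p₂(σ/2)) − δ₁^{1−α}·tr((ρ/2)^α·p₂(σ/2))| ≤ (r·ε₂ + 2^{α−2}·r^α)·(4δ₁ + ε₁). -/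
open Matrix Polynomial
open scoped ComplexOrder

section Aux

variable {n : Type*} [Fintype n] [DecidableEq n]

/-- Conjugation by a unitary matrix as an `ℝ`-algebra homomorphism. -/
noncomputable def conjAlgHom (U : Matrix n n ℂ) (hU : U ∈ Matrix.unitaryGroup n ℂ) :
    Matrix n n ℂ →ₐ[ℝ] Matrix n n ℂ where
  toFun M := U * M * star U
  map_one' := by
    show U * 1 * star U = 1
    rw [mul_one, Matrix.mem_unitaryGroup_iff.mp hU]
  map_mul' M N := by
    show U * (M * N) * star U = (U * M * star U) * (U * N * star U)
    have h1 : star U * U = 1 := Matrix.mem_unitaryGroup_iff'.mp hU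
    calc U * (M * N) * star U = U * M * (star U * U) * N * star U := by
          rw [h1]; noncomm_ring
      _ = U * M * star U * (U * N * star U) := by noncomm_ring
  map_zero' := by simp
  map_add' M N := by
    show U * (M + N) * star U = U * M * star U + U * N * star U
    noncomm_ring
  commutes' c := by
    show U * algebraMap ℝ (Matrix n n ℂ) c * star U = algebraMap ℝ (Matrix n n ℂ) c
    simp only [Algebra.algebraMap_eq_smul_one]
    rw [Matrix.mul_smul, mul_one, Matrix.smul_mul, Matrix.mem_unitaryGroup_iff.mp hU]

/-- `aeval` of a Hermitian matrix via its spectral decomposition. -/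
lemma aeval_hermitian {M : Matrix n n ℂ} (hM : M.IsHermitian) (p : ℝ[X]) :
    Polynomial.aeval M p = (hM.eigenvectorUnitary : Matrix n n ℂ) *
      diagonal (fun i => ((p.eval (hM.eigenvalues i) : ℝ) : ℂ)) *
      star (hM.eigenvectorUnitary : Matrix n n ℂ) := by
  have hU := (hM.eigenvectorUnitary).2
  conv_lhs => rw [hM.spectral_theorem]
  have h1 : (hM.eigenvectorUnitary : Matrix n n ℂ) *
      diagonal (RCLike.ofReal ∘ hM.eigenvalues) * star (hM.eigenvectorUnitary : Matrix n n ℂ)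
      = conjAlgHom _ hU (Matrix.diagonalAlgHom ℝ
          (fun i => ((hM.eigenvalues i : ℝ) : ℂ))) := rfl
  have hfun : (Polynomial.aeval (fun i => ((hM.eigenvalues i : ℝ) : ℂ)) p : n → ℂ)
      = fun i => ((p.eval (hM.eigenvalues i) : ℝ) : ℂ) := by
    funext i
    show (Pi.evalAlgHom ℝ (fun _ => ℂ) i)
      ((Polynomial.aeval (fun i => ((hM.eigenvalues i : ℝ) : ℂ))) p) = _
    rw [← Polynomial.aeval_algHom_apply]
    show (Polynomial.aeval (Complex.ofRealAm (hM.eigenvalues i))) p = _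
    rw [Polynomial.aeval_algHom_apply]
    rw [show (Polynomial.aeval (hM.eigenvalues i)) p = p.eval (hM.eigenvalues i) from
      congrFun (Polynomial.coe_aeval_eq_eval _) p]
    rfl
  rw [Unitary.conjStarAlgAut_apply, h1, Polynomial.aeval_algHom_apply, Polynomial.aeval_algHom_apply, hfun]
  rfl

/-- Product of two conjugated diagonal matrices. -/
lemma conj_diag_mul (U : Matrix n n ℂ) (hU : U ∈ Matrix.unitaryGroup n ℂ) (d e : n → ℂ) :
    U * diagonal d * star U * (U * diagonal e * star U)
      = U * diagonal (fun i => d i * e i) * star U := by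
  have h1 : star U * U = 1 := Matrix.mem_unitaryGroup_iff'.mp hU
  calc U * diagonal d * star U * (U * diagonal e * star U)
      = U * diagonal d * (star U * U) * diagonal e * star U := by noncomm_ring
    _ = U * (diagonal d * diagonal e) * star U := by rw [h1]; noncomm_ring
    _ = U * diagonal (fun i => d i * e i) * star U := by
        rw [Matrix.diagonal_mul_diagonal]

/-- The key trace bound. -/
lemma abs_trace_conj_le (U V : Matrix n n ℂ) (hU : U ∈ Matrix.unitaryGroup n ℂ)
    (hV : V ∈ Matrix.unitaryGroup n ℂ) (d e : n → ℝ) (C : ℝ) (hC0 : 0 ≤ C)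
    (hC : ∀ i, |d i| ≤ C) :
    norm ((U * diagonal (fun i => ((d i : ℝ) : ℂ)) * star U *
        (V * diagonal (fun i => ((e i : ℝ) : ℂ)) * star V)).trace) ≤ C * ∑ j, |e j| := by
  have hU1 : star U * U = 1 := Matrix.mem_unitaryGroup_iff'.mp hU
  have hU2 : U * star U = 1 := Matrix.mem_unitaryGroup_iff.mp hU
  have hV1 : star V * V = 1 := Matrix.mem_unitaryGroup_iff'.mp hV
  set W := star U * V with hW
  have hWW : star W * W = 1 := by
    rw [hW, Matrix.star_mul, star_star]
    calc star V * U * (star U * V) = star V * (U * star U) * V := by noncomm_ring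
      _ = 1 := by rw [hU2, mul_one, hV1]
  have hcol : ∀ j, ∑ i, Complex.normSq (W i j) = 1 := by
    intro j
    have h := congrFun (congrFun hWW j) j
    rw [Matrix.mul_apply, Matrix.one_apply_eq] at h
    have h2 : ((∑ i, Complex.normSq (W i j) : ℝ) : ℂ) = 1 := by
      push_cast
      rw [← h]
      refine Finset.sum_congr rfl fun i _ => ?_
      rw [Matrix.star_apply]
      rw [show (star (W i j) : ℂ) = starRingEnd ℂ (W i j) from rfl]
      rw [mul_comm, Complex.mul_conj]
    exact_mod_cast h2
  have key : (U * diagonal (fun i => ((d i : ℝ) : ℂ)) * star U *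
      (V * diagonal (fun i => ((e i : ℝ) : ℂ)) * star V))
      = U * (diagonal (fun i => ((d i : ℝ) : ℂ)) *
          (W * diagonal (fun i => ((e i : ℝ) : ℂ)) * star W)) * star U := by
    rw [hW, Matrix.star_mul, star_star]
    calc U * diagonal (fun i => ((d i : ℝ) : ℂ)) * star U *
          (V * diagonal (fun i => ((e i : ℝ) : ℂ)) * star V)
        = U * diagonal (fun i => ((d i : ℝ) : ℂ)) * star U *
            (V * diagonal (fun i => ((e i : ℝ) : ℂ)) * (star V * (U * star U))) := by
          rw [hU2, mul_one]
      _ = _ := by noncomm_ring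
  rw [key, Matrix.trace_mul_cycle, hU1, one_mul]
  have htr : (diagonal (fun i => ((d i : ℝ) : ℂ)) *
      (W * diagonal (fun i => ((e i : ℝ) : ℂ)) * star W)).trace
      = ∑ i, ∑ j, ((d i * e j * Complex.normSq (W i j) : ℝ) : ℂ) := by
    rw [Matrix.trace]
    refine Finset.sum_congr rfl fun i _ => ?_
    rw [Matrix.diag_apply, Matrix.diagonal_mul, Matrix.mul_apply, Finset.mul_sum]
    refine Finset.sum_congr rfl fun j _ => ?_
    rw [Matrix.mul_diagonal, Matrix.star_apply]
    rw [show (star (W i j) : ℂ) = starRingEnd ℂ (W i j) from rfl]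
    push_cast
    rw [← Complex.mul_conj]
    ring
  rw [htr]
  calc norm (∑ i, ∑ j, ((d i * e j * Complex.normSq (W i j) : ℝ) : ℂ))
      ≤ ∑ i, ∑ j, norm ((d i * e j * Complex.normSq (W i j) : ℝ) : ℂ) := by
        refine (norm_sum_le _ _).trans ?_
        exact Finset.sum_le_sum fun i _ => norm_sum_le _ _
    _ = ∑ i, ∑ j, |d i| * |e j| * Complex.normSq (W i j) := by
        refine Finset.sum_congr rfl fun i _ => Finset.sum_congr rfl fun j _ => ?_
        rw [Complex.norm_real, Real.norm_eq_abs, abs_mul, abs_mul, abs_of_nonneg (Complex.normSq_nonneg _)]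
    _ ≤ ∑ i, ∑ j, C * |e j| * Complex.normSq (W i j) := by
        refine Finset.sum_le_sum fun i _ => Finset.sum_le_sum fun j _ => ?_
        have h := mul_le_mul_of_nonneg_right (hC i) (abs_nonneg (e j))
        exact mul_le_mul_of_nonneg_right h (Complex.normSq_nonneg _)
    _ = ∑ j, C * |e j| * ∑ i, Complex.normSq (W i j) := by
        rw [Finset.sum_comm]
        exact Finset.sum_congr rfl fun j _ => (Finset.mul_sum _ _ _).symm
    _ = C * ∑ j, |e j| := by
        rw [Finset.mul_sum]
        refine Finset.sum_congr rfl fun j _ => ?_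
        rw [hcol j, mul_one]

lemma half_smul_posSemidef {M : Matrix n n ℂ} (h : M.PosSemidef) :
    ((1 / 2 : ℝ) • M).PosSemidef := by
  have hsm : (1 / 2 : ℝ) • M = ((1 / 2 : ℝ) : ℂ) • M := by
    ext i j; simp [Complex.real_smul]
  rw [hsm]
  constructor
  · show (((1 / 2 : ℝ) : ℂ) • M).conjTranspose = _
    rw [Matrix.conjTranspose_smul, h.1]
    congr 1
    simp
  · intro x
    refine (Matrix.PosSemidef.smul h ?_).2 x
    rw [Complex.le_def]
    norm_num

end Aux

section Scalar

/-- The pointwise bound on the `ρ`-side function. -/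
lemma scalar_f_bound (α ε₁ δ₁ : ℝ) (hα : α ∈ Set.Ioo (0 : ℝ) 1)
    (hε₁ : ε₁ ∈ Set.Ioo (0 : ℝ) 1) (hδ₁ : δ₁ ∈ Set.Ioo (0 : ℝ) 1)
    (p₁ : Polynomial ℝ)
    (hp₁bdd : ∀ x ∈ Set.Icc (-1 : ℝ) 1, |p₁.eval x| ≤ 1)
    (hp₁approx : ∀ x ∈ Set.Icc δ₁ 1, |p₁.eval x - δ₁ ^ (1 - α) / 2 * x ^ (α - 1)| ≤ ε₁)
    (x : ℝ) (hx0 : 0 ≤ x) (hx2 : x ≤ 1 / 2) :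
    |2 * x * p₁.eval x - δ₁ ^ (1 - α) * (if x = 0 then 0 else x ^ α)| ≤ 4 * δ₁ + ε₁ := by
  obtain ⟨hα0, hα1⟩ := hα
  obtain ⟨hε0, _⟩ := hε₁
  obtain ⟨hδ0, hδ1⟩ := hδ₁
  rcases le_or_gt δ₁ x with hx | hx
  · have hxpos : 0 < x := lt_of_lt_of_le hδ0 hx
    rw [if_neg hxpos.ne']
    have hxa : x ^ α = x * x ^ (α - 1) := by
      rw [show α = 1 + (α - 1) by ring, Real.rpow_add hxpos, Real.rpow_one]
      rw [show 1 + (α - 1) - 1 = α - 1 by ring]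
    have h2 : 2 * x * p₁.eval x - δ₁ ^ (1 - α) * x ^ α
        = 2 * x * (p₁.eval x - δ₁ ^ (1 - α) / 2 * x ^ (α - 1)) := by
      rw [hxa]; ring
    rw [h2, abs_mul]
    have h3 := hp₁approx x ⟨hx, by linarith⟩
    have h4 : |2 * x| ≤ 1 := by rw [abs_of_nonneg (by linarith)]; linarith
    calc |2 * x| * |p₁.eval x - δ₁ ^ (1 - α) / 2 * x ^ (α - 1)| ≤ 1 * ε₁ :=
          mul_le_mul h4 h3 (abs_nonneg _) zero_le_one
      _ ≤ 4 * δ₁ + ε₁ := by linarith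
  · have hb := hp₁bdd x ⟨by linarith, by linarith⟩
    have habs1 : |2 * x * p₁.eval x| ≤ 2 * x := by
      rw [abs_mul, abs_of_nonneg (by linarith : (0:ℝ) ≤ 2 * x)]
      calc 2 * x * |p₁.eval x| ≤ 2 * x * 1 :=
            mul_le_mul_of_nonneg_left hb (by linarith)
        _ = 2 * x := by ring
    have hterm0 : 0 ≤ δ₁ ^ (1 - α) * (if x = 0 then 0 else x ^ α) := by
      split_ifs
      · simp
      · exact mul_nonneg (Real.rpow_nonneg hδ0.le _) (Real.rpow_nonneg hx0 _)
    have hterm1 : δ₁ ^ (1 - α) * (if x = 0 then 0 else x ^ α) ≤ δ₁ := by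
      split_ifs
      · simp [hδ0.le]
      · calc δ₁ ^ (1 - α) * x ^ α ≤ δ₁ ^ (1 - α) * δ₁ ^ α := by
              refine mul_le_mul_of_nonneg_left ?_ (Real.rpow_nonneg hδ0.le _)
              exact Real.rpow_le_rpow hx0 hx.le hα0.le
          _ = δ₁ := by
              rw [← Real.rpow_add hδ0]; norm_num
    rw [abs_sub_comm, abs_sub_le_iff]
    constructor
    · have h5 := neg_abs_le (2 * x * p₁.eval x)
      nlinarith [abs_nonneg (2 * x * p₁.eval x)]
    · have h5 := le_abs_self (2 * x * p₁.eval x)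
      nlinarith

/-- Power-mean bound: `∑ μ_j ^ (1-α) ≤ 2^(α-1) r^α` when `μ ≥ 0` sums to `1/2`. -/
lemma sum_rpow_bound {r : ℕ} (hr : 0 < r) (α : ℝ) (hα : α ∈ Set.Ioo (0 : ℝ) 1)
    (μ : Fin r → ℝ) (hμ0 : ∀ j, 0 ≤ μ j) (hμsum : ∑ j, μ j = 1 / 2) :
    ∑ j, μ j ^ (1 - α) ≤ 2 ^ (α - 1) * (r : ℝ) ^ α := by
  obtain ⟨hα0, hα1⟩ := hα
  set q : ℝ := 1 - α with hq
  have hq0 : 0 < q := by rw [hq]; linarith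
  have hq1 : q ≤ 1 := by rw [hq]; linarith
  have hrpos : (0 : ℝ) < r := Nat.cast_pos.mpr hr
  have hp1 : 1 ≤ q⁻¹ := one_le_inv_iff₀.mpr ⟨hq0, hq1⟩
  have key := Real.arith_mean_le_rpow_mean Finset.univ (fun _ => (r : ℝ)⁻¹)
    (fun j => μ j ^ q) (fun i _ => by positivity)
    (by rw [Finset.sum_const, Finset.card_univ, Fintype.card_fin, nsmul_eq_mul]
        field_simp) (fun i _ => Real.rpow_nonneg (hμ0 i) _) hp1
  have hsum1 : ∑ j, (r:ℝ)⁻¹ * μ j ^ q = (r:ℝ)⁻¹ * ∑ j, μ j ^ q :=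
    (Finset.mul_sum _ _ _).symm
  have hsum2 : ∑ j : Fin r, (r:ℝ)⁻¹ * (μ j ^ q) ^ q⁻¹ = (r:ℝ)⁻¹ * (1/2) := by
    rw [← Finset.mul_sum]
    congr 1
    rw [← hμsum]
    refine Finset.sum_congr rfl fun j _ => ?_
    rw [← Real.rpow_mul (hμ0 j), mul_inv_cancel₀ hq0.ne', Real.rpow_one]
  rw [hsum1, hsum2, one_div q⁻¹, inv_inv] at key
  -- key : (r:ℝ)⁻¹ * ∑ μ^q ≤ ((r:ℝ)⁻¹ * (1/2)) ^ q
  have key2 : ∑ j, μ j ^ q ≤ (r:ℝ) * ((r:ℝ)⁻¹ * (1/2)) ^ q := by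
    have h := mul_le_mul_of_nonneg_left key hrpos.le
    calc ∑ j, μ j ^ q = (r:ℝ) * ((r:ℝ)⁻¹ * ∑ j, μ j ^ q) := by
          field_simp
      _ ≤ (r:ℝ) * ((r:ℝ)⁻¹ * (1/2)) ^ q := h
  refine key2.trans_eq ?_
  rw [Real.mul_rpow (by positivity) (by norm_num)]
  rw [Real.inv_rpow hrpos.le, ← Real.rpow_neg hrpos.le]
  rw [show ((1:ℝ)/2) = (2:ℝ)⁻¹ by norm_num, Real.inv_rpow (by norm_num : (0:ℝ) ≤ 2),
    ← Real.rpow_neg (by norm_num : (0:ℝ) ≤ 2)]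
  have h2 : -q = α - 1 := by rw [hq]; ring
  rw [h2]
  rw [show (r:ℝ) * ((r:ℝ) ^ (α - 1) * 2 ^ (α - 1)) = 2 ^ (α-1) * ((r:ℝ) ^ (1:ℝ) * (r:ℝ) ^ (α - 1)) by
    rw [Real.rpow_one]; ring]
  rw [← Real.rpow_add hrpos]
  norm_num

/-- Sum bound on the `σ`-side. -/
lemma sum_g_bound {r : ℕ} (hr : 0 < r) (α ε₂ : ℝ) (hα : α ∈ Set.Ioo (0 : ℝ) 1)
    (hε₂ : ε₂ ∈ Set.Ioo (0 : ℝ) 1) (p₂ : Polynomial ℝ)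
    (hp₂approx : ∀ x ∈ Set.Icc (0 : ℝ) 1, |p₂.eval x - (1 / 2) * x ^ (1 - α)| ≤ ε₂)
    (μ : Fin r → ℝ) (hμ0 : ∀ j, 0 ≤ μ j) (hμsum : ∑ j, μ j = 1 / 2) :
    ∑ j, |p₂.eval (μ j)| ≤ (r : ℝ) * ε₂ + 2 ^ (α - 2) * (r : ℝ) ^ α := by
  have hμle : ∀ j, μ j ≤ 1 := by
    intro j
    have := Finset.single_le_sum (f := μ) (fun i _ => hμ0 i) (Finset.mem_univ j)
    rw [hμsum] at this; linarith
  have hstep : ∀ j, |p₂.eval (μ j)| ≤ ε₂ + (1/2) * μ j ^ (1 - α) := by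
    intro j
    have h1 := hp₂approx (μ j) ⟨hμ0 j, hμle j⟩
    have h2 : |(1/2 : ℝ) * μ j ^ (1 - α)| = (1/2) * μ j ^ (1 - α) := by
      rw [abs_of_nonneg (mul_nonneg (by norm_num) (Real.rpow_nonneg (hμ0 j) _))]
    calc |p₂.eval (μ j)|
        ≤ |p₂.eval (μ j) - (1/2) * μ j ^ (1 - α)| + |(1/2 : ℝ) * μ j ^ (1 - α)| := by
          have := abs_add_le (p₂.eval (μ j) - (1/2) * μ j ^ (1 - α)) ((1/2) * μ j ^ (1 - α))
          simpa using this
      _ ≤ ε₂ + (1/2) * μ j ^ (1 - α) := by rw [h2]; linarith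
  calc ∑ j, |p₂.eval (μ j)| ≤ ∑ j : Fin r, (ε₂ + (1/2) * μ j ^ (1 - α)) :=
        Finset.sum_le_sum fun j _ => hstep j
    _ = (r : ℝ) * ε₂ + (1/2) * ∑ j, μ j ^ (1 - α) := by
        rw [Finset.sum_add_distrib, Finset.sum_const, Finset.card_univ, Fintype.card_fin,
          nsmul_eq_mul, ← Finset.mul_sum]
    _ ≤ (r : ℝ) * ε₂ + (1/2) * (2 ^ (α - 1) * (r : ℝ) ^ α) := by
        have := sum_rpow_bound hr α hα μ hμ0 hμsum
        have h12 : (0:ℝ) ≤ 1/2 := by norm_num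
        nlinarith
    _ = (r : ℝ) * ε₂ + 2 ^ (α - 2) * (r : ℝ) ^ α := by
        congr 1
        rw [show α - 2 = (α - 1) + (-1) by ring, Real.rpow_add (by norm_num : (0:ℝ) < 2),
          Real.rpow_neg_one]
        ring

end Scalar

/-- `|tr(ρ p₁(ρ/2) p₂(σ/2)) - δ₁^{1-α} tr((ρ/2)^α p₂(σ/2))|
      ≤ (r ε₂ + 2^{α-2} r^α)(4δ₁ + ε₁)`. -/
theorem abs_trace_poly_half_approx_le {r : ℕ} (hr : 0 < r)
    (α ε₁ δ₁ ε₂ : ℝ) (hα : α ∈ Set.Ioo (0 : ℝ) 1)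
    (hε₁ : ε₁ ∈ Set.Ioo (0 : ℝ) 1) (hδ₁ : δ₁ ∈ Set.Ioo (0 : ℝ) 1)
    (hε₂ : ε₂ ∈ Set.Ioo (0 : ℝ) 1)
    (ρ σ : Matrix (Fin r) (Fin r) ℂ)
    (hρ : ρ.PosSemidef) (hρ1 : ρ.trace = 1)
    (hσ : σ.PosSemidef) (hσ1 : σ.trace = 1)
    (p₁ p₂ : Polynomial ℝ)
    (hp₁bdd : ∀ x ∈ Set.Icc (-1 : ℝ) 1, |p₁.eval x| ≤ 1)
    (hp₁approx : ∀ x ∈ Set.Icc δ₁ 1, |p₁.eval x - δ₁ ^ (1 - α) / 2 * x ^ (α - 1)| ≤ ε₁)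
    (hp₂bdd : ∀ x ∈ Set.Icc (-1 : ℝ) 1, |p₂.eval x| ≤ 1)
    (hp₂approx : ∀ x ∈ Set.Icc (0 : ℝ) 1, |p₂.eval x - (1 / 2) * x ^ (1 - α)| ≤ ε₂) :
    norm
        ((ρ * Polynomial.aeval ((1 / 2 : ℝ) • ρ) p₁
            * Polynomial.aeval ((1 / 2 : ℝ) • σ) p₂).trace
          - ((δ₁ ^ (1 - α) : ℝ) : ℂ)
            * (matPow ((1 / 2 : ℝ) • ρ) α * Polynomial.aeval ((1 / 2 : ℝ) • σ) p₂).trace)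
      ≤ ((r : ℝ) * ε₂ + 2 ^ (α - 2) * (r : ℝ) ^ α) * (4 * δ₁ + ε₁) := by
  have hAps : ((1 / 2 : ℝ) • ρ).PosSemidef := half_smul_posSemidef hρ
  have hBps : ((1 / 2 : ℝ) • σ).PosSemidef := half_smul_posSemidef hσ
  set A := (1 / 2 : ℝ) • ρ with hAdef
  set B := (1 / 2 : ℝ) • σ with hBdef
  have hA : A.IsHermitian := hAps.1
  have hB : B.IsHermitian := hBps.1
  set U : Matrix (Fin r) (Fin r) ℂ := (hA.eigenvectorUnitary : Matrix (Fin r) (Fin r) ℂ)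
    with hUdef
  set V : Matrix (Fin r) (Fin r) ℂ := (hB.eigenvectorUnitary : Matrix (Fin r) (Fin r) ℂ)
    with hVdef
  have hUmem : U ∈ Matrix.unitaryGroup (Fin r) ℂ := (hA.eigenvectorUnitary).2
  have hVmem : V ∈ Matrix.unitaryGroup (Fin r) ℂ := (hB.eigenvectorUnitary).2
  set lam : Fin r → ℝ := hA.eigenvalues with hlamdef
  set mu : Fin r → ℝ := hB.eigenvalues with hmudef
  have hlam0 : ∀ i, 0 ≤ lam i := fun i => hAps.eigenvalues_nonneg i
  have hmu0 : ∀ i, 0 ≤ mu i := fun i => hBps.eigenvalues_nonneg i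
  -- sums of eigenvalues
  have htrsum : ∀ (M : Matrix (Fin r) (Fin r) ℂ) (hM : M.IsHermitian),
      M.trace = ∑ i, ((hM.eigenvalues i : ℝ) : ℂ) := by
    intro M hM
    conv_lhs => rw [hM.spectral_theorem]
    rw [Unitary.conjStarAlgAut_apply, Matrix.trace_mul_cycle,
      Matrix.mem_unitaryGroup_iff'.mp (hM.eigenvectorUnitary).2, one_mul,
      Matrix.trace_diagonal]
    rfl
  have hlamsum : ∑ i, lam i = 1 / 2 := by
    have h1 : A.trace = ((1 / 2 : ℝ) : ℂ) := by
      rw [hAdef, Matrix.trace_smul, hρ1, Complex.real_smul, mul_one]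
    have h2 := htrsum A hA
    rw [h1] at h2
    exact_mod_cast h2.symm
  have hmusum : ∑ i, mu i = 1 / 2 := by
    have h1 : B.trace = ((1 / 2 : ℝ) : ℂ) := by
      rw [hBdef, Matrix.trace_smul, hσ1, Complex.real_smul, mul_one]
    have h2 := htrsum B hB
    rw [h1] at h2
    exact_mod_cast h2.symm
  have hlamle : ∀ i, lam i ≤ 1 / 2 := by
    intro i
    have h := Finset.single_le_sum (f := lam) (fun j _ => hlam0 j) (Finset.mem_univ i)
    rw [hlamsum] at h
    exact h
  -- representations
  set hfun : ℝ → ℝ := fun x => if x = 0 then 0 else x ^ α with hhdef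
  set q : ℝ[X] := Polynomial.C 2 * Polynomial.X * p₁ with hqdef
  have hρ2 : ρ = (2 : ℝ) • A := by
    rw [hAdef, smul_smul]
    norm_num
  have key1 : ρ * (Polynomial.aeval A) p₁ = (Polynomial.aeval A) q := by
    rw [hqdef, _root_.map_mul, _root_.map_mul, aeval_X, aeval_C, hρ2, Algebra.smul_def]
  have repD1 : (Polynomial.aeval A) q
      = U * diagonal (fun i => ((q.eval (lam i) : ℝ) : ℂ)) * star U := aeval_hermitian hA q
  have repP2 : (Polynomial.aeval B) p₂
      = V * diagonal (fun i => ((p₂.eval (mu i) : ℝ) : ℂ)) * star V := aeval_hermitian hB p₂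
  have repPow : matPow A α = U * diagonal (fun i => ((hfun (lam i) : ℝ) : ℂ)) * star U := by
    unfold matPow
    rw [dif_pos hA]
    rfl
  have repcPow : ((δ₁ ^ (1 - α) : ℝ) : ℂ) • matPow A α
      = U * diagonal (fun i => (((δ₁ ^ (1 - α) * hfun (lam i)) : ℝ) : ℂ)) * star U := by
    rw [repPow]
    have hd : (fun i => (((δ₁ ^ (1 - α) * hfun (lam i)) : ℝ) : ℂ))
        = ((δ₁ ^ (1 - α) : ℝ) : ℂ) • (fun i => ((hfun (lam i) : ℝ) : ℂ)) := by
      funext i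
      simp [Complex.ofReal_mul]
    rw [hd, Matrix.diagonal_smul, Matrix.mul_smul, Matrix.smul_mul]
  have repDiff : (Polynomial.aeval A) q - ((δ₁ ^ (1 - α) : ℝ) : ℂ) • matPow A α
      = U * diagonal (fun i =>
          (((q.eval (lam i) - δ₁ ^ (1 - α) * hfun (lam i)) : ℝ) : ℂ)) * star U := by
    rw [repD1, repcPow, ← sub_mul, ← mul_sub, Matrix.diagonal_sub]
    congr 2
    funext i
    simp [Complex.ofReal_sub]
  have hmain : (ρ * (Polynomial.aeval A) p₁ * (Polynomial.aeval B) p₂).trace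
        - ((δ₁ ^ (1 - α) : ℝ) : ℂ) * (matPow A α * (Polynomial.aeval B) p₂).trace
      = (((Polynomial.aeval A) q - ((δ₁ ^ (1 - α) : ℝ) : ℂ) • matPow A α)
          * (Polynomial.aeval B) p₂).trace := by
    rw [sub_mul, Matrix.trace_sub, key1, smul_mul_assoc, Matrix.trace_smul, smul_eq_mul]
  rw [hmain, repDiff, repP2]
  have hC0 : (0 : ℝ) ≤ 4 * δ₁ + ε₁ := by
    obtain ⟨h1, _⟩ := hδ₁; obtain ⟨h2, _⟩ := hε₁; linarith
  have hfb : ∀ i, |q.eval (lam i) - δ₁ ^ (1 - α) * hfun (lam i)| ≤ 4 * δ₁ + ε₁ := by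
    intro i
    have hq : q.eval (lam i) = 2 * lam i * p₁.eval (lam i) := by
      rw [hqdef]
      simp
    rw [hq, hhdef]
    exact scalar_f_bound α ε₁ δ₁ hα hε₁ hδ₁ p₁ hp₁bdd hp₁approx (lam i) (hlam0 i) (hlamle i)
  calc norm ((U * diagonal (fun i =>
          (((q.eval (lam i) - δ₁ ^ (1 - α) * hfun (lam i)) : ℝ) : ℂ)) * star U *
        (V * diagonal (fun i => ((p₂.eval (mu i) : ℝ) : ℂ)) * star V)).trace)
      ≤ (4 * δ₁ + ε₁) * ∑ j, |p₂.eval (mu j)| :=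
        abs_trace_conj_le U V hUmem hVmem
          (fun i => q.eval (lam i) - δ₁ ^ (1 - α) * hfun (lam i))
          (fun j => p₂.eval (mu j)) (4 * δ₁ + ε₁) hC0 hfb
    _ ≤ (4 * δ₁ + ε₁) * ((r : ℝ) * ε₂ + 2 ^ (α - 2) * (r : ℝ) ^ α) :=
        mul_le_mul_of_nonneg_left
          (sum_g_bound hr α ε₂ hα hε₂ p₂ hp₂approx mu hmu0 hmusum) hC0
    _ = ((r : ℝ) * ε₂ + 2 ^ (α - 2) * (r : ℝ) ^ α) * (4 * δ₁ + ε₁) := by ring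
end

section
/- Let α ∈ (0,1) be a constant, let ρ and σ be density matrices of the same size, each of rank at most r, let δ₁, ε₂ ∈ (0,1), and let p₂ be a real polynomial with |p₂(x)| ≤ 1 for all x ∈ [−1,1] and |p₂(x) − (1/2)x^{1−α}| ≤ ε₂ for all x ∈ [0,1]. Then |δ₁^{1−α}·tr((ρ/2)^α·p₂(σ/2)) − (δ₁^{1−α}/4)·tr(ρ^α·σ^{1−α})| ≤ (δ₁^{1−α}/2^α)·r^{1−α}·ε₂. -/
open Matrix Polynomial
open scoped ComplexOrder

section Aux
variable {n : Type*} [Fintype n] [DecidableEq n]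

lemma contOnSpec (f : ℝ → ℝ) (A : Matrix n n ℂ) : ContinuousOn f (spectrum ℝ A) :=
  Matrix.finite_real_spectrum.continuousOn f

lemma specSubset {A : Matrix n n ℂ} (hA : A.PosSemidef) : spectrum ℝ A ⊆ Set.Ici 0 := by
  rw [Matrix.IsHermitian.spectrum_real_eq_range_eigenvalues (hA := hA.1)]
  rintro - ⟨i, rfl⟩
  exact hA.eigenvalues_nonneg i

lemma smul_posSemidef {A : Matrix n n ℂ} (hA : A.PosSemidef) {c : ℝ} (hc : 0 ≤ c) :
    ((c : ℝ) • A).PosSemidef := by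
  exact hA.smul hc

lemma matPow_eq_cfc {A : Matrix n n ℂ} (hA : A.PosSemidef) {β : ℝ} (hβ : β ≠ 0) :
    matPow A β = cfc (fun x : ℝ => x ^ β) A := by
  rw [matPow, dif_pos hA.1, ← Matrix.IsHermitian.cfc_eq]
  exact cfc_congr fun x hx => by
    rcases eq_or_ne x 0 with rfl | hx0
    · simp [Real.zero_rpow hβ]
    · simp [hx0]

lemma matPow_smul {A : Matrix n n ℂ} (hA : A.PosSemidef) {β c : ℝ} (hβ : β ≠ 0) (hc : 0 ≤ c) :
    matPow (c • A) β = (c ^ β : ℝ) • matPow A β := by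
  rw [matPow_eq_cfc (smul_posSemidef hA hc) hβ, matPow_eq_cfc hA hβ]
  have h1 : cfc (fun x : ℝ => x ^ β) (c • A) = cfc (fun x : ℝ => (c • x) ^ β) A :=
    (cfc_comp_smul c (fun x : ℝ => x ^ β) A
      ((Matrix.finite_real_spectrum.image _).continuousOn _) hA.1).symm
  rw [h1]
  simp only [smul_eq_mul]
  rw [cfc_congr (g := fun x : ℝ => c ^ β * x ^ β)
    (fun x hx => Real.mul_rpow hc (specSubset hA hx))]
  exact cfc_const_mul _ _ _ (contOnSpec _ _)

lemma trace_cfc' {B : Matrix n n ℂ} (hB : B.IsHermitian) (g : ℝ → ℝ) :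
    (hB.cfc g).trace = ∑ i, (g (hB.eigenvalues i) : ℂ) := by
  rw [Matrix.IsHermitian.cfc, Unitary.conjStarAlgAut_apply, trace_mul_cycle]
  rw [show star (hB.eigenvectorUnitary : Matrix n n ℂ) * (hB.eigenvectorUnitary : Matrix n n ℂ)
      = 1 from Unitary.star_mul_self_of_mem (SetLike.coe_mem _), one_mul, trace_diagonal]
  rfl

lemma trace_mul_cfc {B : Matrix n n ℂ} (hB : B.IsHermitian) (M : Matrix n n ℂ) (g : ℝ → ℝ) :
    (M * hB.cfc g).trace
      = ∑ i, (star (hB.eigenvectorUnitary : Matrix n n ℂ) * M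
          * (hB.eigenvectorUnitary : Matrix n n ℂ)) i i * (g (hB.eigenvalues i) : ℂ) := by
  rw [Matrix.IsHermitian.cfc, Unitary.conjStarAlgAut_apply]
  rw [show M * ((hB.eigenvectorUnitary : Matrix n n ℂ)
        * diagonal (RCLike.ofReal ∘ g ∘ hB.eigenvalues)
        * star (hB.eigenvectorUnitary : Matrix n n ℂ))
      = (M * (hB.eigenvectorUnitary : Matrix n n ℂ))
        * diagonal (RCLike.ofReal ∘ g ∘ hB.eigenvalues)
        * star (hB.eigenvectorUnitary : Matrix n n ℂ) by
        simp only [Matrix.mul_assoc]]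
  rw [trace_mul_cycle, ← Matrix.mul_assoc, Matrix.trace]
  simp [Matrix.mul_diagonal, Matrix.diag, Matrix.mul_assoc]

lemma diag_nonneg' {Q : Matrix n n ℂ} (hQ : Q.PosSemidef) (i : n) : 0 ≤ Q i i := by
  exact hQ.diag_nonneg

lemma abs_trace_mul_cfc_le {B P : Matrix n n ℂ} (hB : B.IsHermitian) (hP : P.PosSemidef)
    {g : ℝ → ℝ} {ε : ℝ} (hg : ∀ i, |g (hB.eigenvalues i)| ≤ ε) :
    ‖(P * hB.cfc g).trace‖ ≤ ε * P.trace.re := by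
  set U : Matrix n n ℂ := (hB.eigenvectorUnitary : Matrix n n ℂ) with hU
  set Q : Matrix n n ℂ := star U * P * U with hQdef
  have hQ : Q.PosSemidef := by
    rw [hQdef, Matrix.star_eq_conjTranspose]
    exact hP.conjTranspose_mul_mul_same _
  have hQtr : Q.trace = P.trace := by
    rw [hQdef, trace_mul_cycle,
      show U * star U = 1 from Unitary.mul_star_self_of_mem (SetLike.coe_mem _), one_mul]
  have hdiag : ∀ i, 0 ≤ (Q i i).re ∧ (Q i i).im = 0 := fun i => by
    have := diag_nonneg' hQ i
    rw [Complex.le_def] at this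
    exact ⟨by simpa using this.1, by simpa using this.2.symm⟩
  have habs : ∀ i, ‖Q i i‖ = (Q i i).re := fun i => by
    rw [show Q i i = ((Q i i).re : ℂ) from Complex.ext rfl (hdiag i).2,
      Complex.norm_real, Real.norm_eq_abs, abs_of_nonneg (hdiag i).1]
    simp
  rw [trace_mul_cfc hB P g]
  calc ‖∑ i, Q i i * ((g (hB.eigenvalues i) : ℝ) : ℂ)‖
      ≤ ∑ i, ‖Q i i * ((g (hB.eigenvalues i) : ℝ) : ℂ)‖ := by
        exact norm_sum_le _ _
    _ = ∑ i, (Q i i).re * |g (hB.eigenvalues i)| := by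
        simp only [norm_mul, habs, Complex.norm_real, Real.norm_eq_abs]
    _ ≤ ∑ i, (Q i i).re * ε := by
        refine Finset.sum_le_sum fun i _ => mul_le_mul_of_nonneg_left (hg i) (hdiag i).1
    _ = ε * Q.trace.re := by
        rw [Matrix.trace, Complex.re_sum, Finset.mul_sum]
        simp [Matrix.diag, mul_comm]
    _ = ε * P.trace.re := by rw [hQtr]

lemma sum_rpow_le_card_rpow {ι : Type*} [Fintype ι] (lam : ι → ℝ) (hnn : ∀ i, 0 ≤ lam i)
    (hsum : ∑ i, lam i = 1) (r : ℕ) (hcard : Fintype.card {i // lam i ≠ 0} ≤ r)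
    {α : ℝ} (hα : α ∈ Set.Ioo (0:ℝ) 1) :
    ∑ i, lam i ^ α ≤ (r : ℝ) ^ (1 - α) := by
  classical
  obtain ⟨hα0, hα1⟩ := hα
  set s : Finset ι := Finset.univ.filter (fun i => lam i ≠ 0) with hs
  have hks : s.card = Fintype.card {i // lam i ≠ 0} := (Fintype.card_subtype _).symm
  have hsum_s : ∑ i ∈ s, lam i = 1 := by
    rw [← hsum]
    exact Finset.sum_filter_of_ne fun i _ h => h
  have hsum_pow : ∑ i, lam i ^ α = ∑ i ∈ s, lam i ^ α := by
    symm
    refine Finset.sum_filter_of_ne fun i _ h => ?_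
    intro h0
    rw [h0, Real.zero_rpow hα0.ne'] at h
    exact h rfl
  have hne : s.Nonempty := by
    by_contra h
    rw [Finset.not_nonempty_iff_eq_empty] at h
    rw [h, Finset.sum_empty] at hsum_s; norm_num at hsum_s
  have hk0 : (0:ℝ) < s.card := by exact_mod_cast Finset.card_pos.mpr hne
  have key := Real.arith_mean_le_rpow_mean s (fun _ => (s.card : ℝ)⁻¹) (fun i => lam i ^ α)
    (fun i _ => by positivity) (by simp [Finset.sum_const]; field_simp)
    (fun i _ => Real.rpow_nonneg (hnn i) α) (p := 1/α) (by
      rw [le_div_iff₀ hα0]; linarith)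
  have hzp : ∀ i, (lam i ^ α) ^ (1/α) = lam i := fun i => by
    rw [← Real.rpow_mul (hnn i), mul_one_div, div_self hα0.ne', Real.rpow_one]
  rw [hsum_pow]
  have h1 : ∑ i ∈ s, ((s.card:ℝ))⁻¹ * lam i ^ α = (s.card:ℝ)⁻¹ * ∑ i ∈ s, lam i ^ α := by
    rw [Finset.mul_sum]
  have h2 : ∑ i ∈ s, ((s.card:ℝ))⁻¹ * (lam i ^ α) ^ (1/α) = (s.card:ℝ)⁻¹ := by
    simp only [hzp]
    rw [← Finset.mul_sum, hsum_s, mul_one]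
  rw [h1, h2] at key
  have h3 : (1:ℝ) / (1/α) = α := by field_simp
  rw [h3] at key
  -- key : (s.card)⁻¹ * ∑ ≤ ((s.card)⁻¹) ^ α
  have h4 : ∑ i ∈ s, lam i ^ α ≤ (s.card : ℝ) ^ ((1:ℝ) - α) := by
    have := mul_le_mul_of_nonneg_left key (le_of_lt hk0)
    rw [← mul_assoc, mul_inv_cancel₀ hk0.ne', one_mul] at this
    calc ∑ i ∈ s, lam i ^ α ≤ (s.card:ℝ) * ((s.card:ℝ)⁻¹) ^ α := this
      _ = (s.card : ℝ) ^ ((1:ℝ) - α) := by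
          rw [show ((s.card:ℝ))⁻¹ ^ α = (s.card:ℝ) ^ (-α) by
              rw [← Real.rpow_neg_one, ← Real.rpow_mul hk0.le]; norm_num,
            show (1:ℝ) - α = 1 + (-α) by ring, Real.rpow_add hk0, Real.rpow_one]
  refine h4.trans (Real.rpow_le_rpow (le_of_lt hk0) ?_ (by linarith))
  exact_mod_cast hks ▸ hcard

lemma cfc_posSemidef' {B : Matrix n n ℂ} (hB : B.IsHermitian) {f : ℝ → ℝ}
    (hf : ∀ i, 0 ≤ f (hB.eigenvalues i)) : (hB.cfc f).PosSemidef := by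
  rw [Matrix.IsHermitian.cfc]
  have hd : PosSemidef (diagonal (RCLike.ofReal ∘ f ∘ hB.eigenvalues) : Matrix n n ℂ) :=
    posSemidef_diagonal_iff.mpr fun i => by
      simpa using Complex.zero_le_real.mpr (hf i)
  simpa [Matrix.star_eq_conjTranspose] using
    hd.mul_mul_conjTranspose_same (hB.eigenvectorUnitary : Matrix n n ℂ)

lemma trace_eq_sum_eig {B : Matrix n n ℂ} (hB : B.IsHermitian) :
    B.trace = ∑ i, (hB.eigenvalues i : ℂ) := by
  have hB' : IsSelfAdjoint B := hB
  conv_lhs => rw [← cfc_id (R := ℝ) B hB', Matrix.IsHermitian.cfc_eq hB]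
  exact trace_cfc' hB _

end Aux

/-- `|δ₁^{1-α} tr((ρ/2)^α p₂(σ/2)) - (δ₁^{1-α}/4) tr(ρ^α σ^{1-α})|
      ≤ (δ₁^{1-α}/2^α) r^{1-α} ε₂`. -/
theorem abs_trace_pow_half_poly_sub_trace_pow_pow_le
    {n : Type*} [Fintype n] [DecidableEq n] (r : ℕ)
    (α δ₁ ε₂ : ℝ) (hα : α ∈ Set.Ioo (0 : ℝ) 1)
    (hδ₁ : δ₁ ∈ Set.Ioo (0 : ℝ) 1) (hε₂ : ε₂ ∈ Set.Ioo (0 : ℝ) 1)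
    (ρ σ : Matrix n n ℂ)
    (hρ : ρ.PosSemidef) (hρ1 : ρ.trace = 1) (hρr : ρ.rank ≤ r)
    (hσ : σ.PosSemidef) (hσ1 : σ.trace = 1) (hσr : σ.rank ≤ r)
    (p₂ : Polynomial ℝ)
    (hp₂bdd : ∀ x ∈ Set.Icc (-1 : ℝ) 1, |p₂.eval x| ≤ 1)
    (hp₂approx : ∀ x ∈ Set.Icc (0 : ℝ) 1, |p₂.eval x - (1 / 2) * x ^ (1 - α)| ≤ ε₂) :
    ‖(((δ₁ ^ (1 - α) : ℝ) : ℂ)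
          * (matPow ((1 / 2 : ℝ) • ρ) α * Polynomial.aeval ((1 / 2 : ℝ) • σ) p₂).trace
        - ((δ₁ ^ (1 - α) / 4 : ℝ) : ℂ) * (matPow ρ α * matPow σ (1 - α)).trace)‖
      ≤ δ₁ ^ (1 - α) / 2 ^ α * (r : ℝ) ^ (1 - α) * ε₂ := by
  obtain ⟨hα0, hα1⟩ := hα
  have h1α : (1 : ℝ) - α ≠ 0 := by intro h; linarith [h]
  have hA : ((1/2 : ℝ) • ρ).PosSemidef := smul_posSemidef hρ (by norm_num)
  have hB : ((1/2 : ℝ) • σ).PosSemidef := smul_posSemidef hσ (by norm_num)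
  have hB' : IsSelfAdjoint ((1/2 : ℝ) • σ) := hB.1
  set f₁ : ℝ → ℝ := fun x => if x = 0 then 0 else x ^ (1 - α) with hf₁
  set g : ℝ → ℝ := fun x => p₂.eval x - (1/2 : ℝ) * f₁ x with hgdef
  -- decomposition of the polynomial part
  have hEdef : hB.1.cfc g
      = Polynomial.aeval ((1/2 : ℝ) • σ) p₂ - (1/2 : ℝ) • matPow ((1/2 : ℝ) • σ) (1 - α) := by
    rw [← Matrix.IsHermitian.cfc_eq, matPow, dif_pos hB.1, ← Matrix.IsHermitian.cfc_eq,
      ← cfc_polynomial (R := ℝ) p₂ ((1/2 : ℝ) • σ) hB',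
      ← cfc_const_mul (1/2 : ℝ) f₁ ((1/2 : ℝ) • σ) (contOnSpec _ _)]
    exact cfc_sub _ _ _ (contOnSpec _ _) (contOnSpec _ _)
  have hPdef : matPow ((1/2 : ℝ) • ρ) α = ((1/2 : ℝ) ^ α : ℝ) • matPow ρ α :=
    matPow_smul hρ hα0.ne' (by norm_num)
  have hBpow : matPow ((1/2 : ℝ) • σ) (1 - α) = ((1/2 : ℝ) ^ (1 - α) : ℝ) • matPow σ (1 - α) :=
    matPow_smul hσ h1α (by norm_num)
  -- key trace identity
  have hhalf : ((1/2 : ℝ) : ℂ) * (((1/2 : ℝ) ^ α : ℝ) : ℂ) * (((1/2 : ℝ) ^ (1 - α) : ℝ) : ℂ)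
      = ((1/4 : ℝ) : ℂ) := by
    rw [← Complex.ofReal_mul, ← Complex.ofReal_mul]
    congr 1
    rw [mul_assoc, ← Real.rpow_add (by norm_num : (0:ℝ) < 1/2), show α + (1 - α) = 1 by ring,
      Real.rpow_one]
    norm_num
  have key : (matPow ((1/2 : ℝ) • ρ) α * Polynomial.aeval ((1/2 : ℝ) • σ) p₂).trace
      = (matPow ((1/2 : ℝ) • ρ) α * hB.1.cfc g).trace
        + ((1/4 : ℝ) : ℂ) * (matPow ρ α * matPow σ (1 - α)).trace := by
    have h5 : Polynomial.aeval ((1/2 : ℝ) • σ) p₂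
        = hB.1.cfc g + (1/2 : ℝ) • matPow ((1/2 : ℝ) • σ) (1 - α) := by
      rw [hEdef, sub_add_cancel]
    rw [h5, mul_add, trace_add]
    congr 1
    rw [mul_smul_comm, trace_smul, hPdef, hBpow, smul_mul_assoc, mul_smul_comm,
      trace_smul, trace_smul]
    rw [smul_smul, smul_smul, Complex.real_smul, ← hhalf]
    push_cast
    ring
  -- the difference is δ' times the error trace
  have hdiff : ((δ₁ ^ (1 - α) : ℝ) : ℂ)
          * (matPow ((1/2 : ℝ) • ρ) α * Polynomial.aeval ((1/2 : ℝ) • σ) p₂).trace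
        - ((δ₁ ^ (1 - α) / 4 : ℝ) : ℂ) * (matPow ρ α * matPow σ (1 - α)).trace
      = ((δ₁ ^ (1 - α) : ℝ) : ℂ) * (matPow ((1/2 : ℝ) • ρ) α * hB.1.cfc g).trace := by
    rw [key]
    push_cast
    ring
  -- eigenvalue bounds for B
  have hμ0 : ∀ i, 0 ≤ hB.1.eigenvalues i := hB.eigenvalues_nonneg
  have hμsum : ∑ i, hB.1.eigenvalues i = 1/2 := by
    have h := (trace_eq_sum_eig hB.1).symm
    rw [Matrix.trace_smul, hσ1] at h
    have : ((∑ i, hB.1.eigenvalues i : ℝ) : ℂ) = ((1/2 : ℝ) : ℂ) := by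
      push_cast
      rw [h]
      simp [Complex.real_smul]
    exact_mod_cast this
  have hμ1 : ∀ i, hB.1.eigenvalues i ≤ 1 := fun i => by
    have : hB.1.eigenvalues i ≤ ∑ j, hB.1.eigenvalues j :=
      Finset.single_le_sum (fun j _ => hμ0 j) (Finset.mem_univ i)
    rw [hμsum] at this; linarith
  have hgeq : ∀ x : ℝ, g x = p₂.eval x - (1/2 : ℝ) * x ^ (1 - α) := fun x => by
    rcases eq_or_ne x 0 with rfl | hne
    · simp [hgdef, hf₁, Real.zero_rpow h1α]
    · simp [hgdef, hf₁, hne]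
  have hg : ∀ i, |g (hB.1.eigenvalues i)| ≤ ε₂ := fun i => by
    rw [hgeq]
    exact hp₂approx (hB.1.eigenvalues i) ⟨hμ0 i, hμ1 i⟩
  -- positivity of P
  have hP : (matPow ((1/2 : ℝ) • ρ) α).PosSemidef := by
    rw [matPow, dif_pos hA.1]
    refine cfc_posSemidef' hA.1 fun i => ?_
    rcases eq_or_ne (hA.1.eigenvalues i) 0 with h0 | h0
    · rw [if_pos h0]
    · rw [if_neg h0]
      exact Real.rpow_nonneg (hA.eigenvalues_nonneg i) _
  -- trace estimate for P
  have hlam0 : ∀ i, 0 ≤ hρ.1.eigenvalues i := hρ.eigenvalues_nonneg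
  have hlamsum : ∑ i, hρ.1.eigenvalues i = 1 := by
    have h := (trace_eq_sum_eig hρ.1).symm
    rw [hρ1] at h
    exact_mod_cast h
  have hsum_le : ∑ i, hρ.1.eigenvalues i ^ α ≤ (r : ℝ) ^ (1 - α) := by
    refine sum_rpow_le_card_rpow _ hlam0 hlamsum r ?_ ⟨hα0, hα1⟩
    rw [← hρ.1.rank_eq_card_non_zero_eigs]
    exact hρr
  have hPtr : (matPow ((1/2 : ℝ) • ρ) α).trace.re
      ≤ (1/2 : ℝ) ^ α * (r : ℝ) ^ (1 - α) := by
    rw [hPdef, trace_smul]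
    have htr : (matPow ρ α).trace = ((∑ i, hρ.1.eigenvalues i ^ α : ℝ) : ℂ) := by
      rw [matPow, dif_pos hρ.1, trace_cfc' hρ.1]
      push_cast
      refine Finset.sum_congr rfl fun i _ => ?_
      rcases eq_or_ne (hρ.1.eigenvalues i) 0 with h0 | h0
      · simp [h0, Real.zero_rpow hα0.ne']
      · simp [h0]
    rw [htr, Complex.real_smul, ← Complex.ofReal_mul]
    rw [Complex.ofReal_re]
    exact mul_le_mul_of_nonneg_left hsum_le (Real.rpow_nonneg (by norm_num) _)
  -- put it together
  rw [hdiff, norm_mul, Complex.norm_real, Real.norm_eq_abs,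
    abs_of_pos (Real.rpow_pos_of_pos hδ₁.1 _)]
  have hbound := abs_trace_mul_cfc_le hB.1 hP hg
  have hδ'pos : (0:ℝ) < δ₁ ^ (1 - α) := Real.rpow_pos_of_pos hδ₁.1 _
  calc δ₁ ^ (1 - α) * ‖(matPow ((1/2 : ℝ) • ρ) α * hB.1.cfc g).trace‖
      ≤ δ₁ ^ (1 - α) * (ε₂ * (matPow ((1/2 : ℝ) • ρ) α).trace.re) :=
        mul_le_mul_of_nonneg_left hbound hδ'pos.le
    _ ≤ δ₁ ^ (1 - α) * (ε₂ * ((1/2 : ℝ) ^ α * (r : ℝ) ^ (1 - α))) := by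
        refine mul_le_mul_of_nonneg_left (mul_le_mul_of_nonneg_left hPtr hε₂.1.le) hδ'pos.le
    _ = δ₁ ^ (1 - α) / 2 ^ α * (r : ℝ) ^ (1 - α) * ε₂ := by
        rw [show ((1:ℝ)/2) ^ α = ((2:ℝ) ^ α)⁻¹ by
          rw [one_div, Real.inv_rpow (by norm_num : (0:ℝ) ≤ 2)]]
        field_simp
end

section
/- Let α ∈ (0,1) and x ∈ [0,1]. Then (1+x)^α + (1−x)^α ≤ 2 − α(1−α)x². -/
open Real

private lemma aux_deriv_ineq (α : ℝ) (hα : α ∈ Set.Ioo (0 : ℝ) 1) :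
    ∀ x ∈ Set.Ico (0 : ℝ) 1,
      2 * (1 - α) * x ≤ (1 - x) ^ (α - 1) - (1 + x) ^ (α - 1) := by
  obtain ⟨hα0, hα1⟩ := hα
  set G : ℝ → ℝ := fun t => (1 - t) ^ (α - 1) - (1 + t) ^ (α - 1) - 2 * (1 - α) * t with hG
  have hder : ∀ t ∈ Set.Ico (0 : ℝ) 1, HasDerivAt G
      ((1 - α) * ((1 - t) ^ (α - 2) + (1 + t) ^ (α - 2) - 2)) t := by
    intro t ht
    obtain ⟨ht0, ht1⟩ := ht
    have h1 : (0:ℝ) < 1 - t := by linarith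
    have h2 : (0:ℝ) < 1 + t := by linarith
    have d1 := HasDerivAt.rpow_const (p := α - 1) ((hasDerivAt_id t).const_sub 1)
      (Or.inl h1.ne')
    have d2 := HasDerivAt.rpow_const (p := α - 1) ((hasDerivAt_id t).const_add 1)
      (Or.inl h2.ne')
    simp only [id_eq] at d1 d2
    have d3 : HasDerivAt (fun t : ℝ => 2 * (1 - α) * t) (2 * (1 - α)) t := by
      simpa using (hasDerivAt_id t).const_mul (2 * (1 - α))
    have := (d1.sub d2).sub d3
    refine this.congr_deriv ?_
    ring_nf
  intro x hx
  have hmono : MonotoneOn G (Set.Ico (0 : ℝ) 1) := by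
    apply monotoneOn_of_deriv_nonneg (convex_Ico 0 1)
    · exact fun t ht => (hder t ht).continuousAt.continuousWithinAt
    · intro t ht
      rw [interior_Ico] at ht
      exact ((hder t ⟨ht.1.le, ht.2⟩).differentiableAt).differentiableWithinAt
    · intro t ht
      rw [interior_Ico] at ht
      obtain ⟨ht0, ht1⟩ := ht
      rw [(hder t ⟨ht0.le, ht1⟩).deriv]
      have h1 : (0:ℝ) < 1 - t := by linarith
      have h2 : (0:ℝ) < 1 + t := by linarith
      have hu : (0:ℝ) < (1 - t) ^ (α - 2) := rpow_pos_of_pos h1 _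
      have hv : (0:ℝ) < (1 + t) ^ (α - 2) := rpow_pos_of_pos h2 _
      have huv : (1:ℝ) ≤ (1 - t) ^ (α - 2) * (1 + t) ^ (α - 2) := by
        rw [← mul_rpow h1.le h2.le]
        exact Real.one_le_rpow_of_pos_of_le_one_of_nonpos (by nlinarith) (by nlinarith)
          (by linarith)
      have hsum : (2:ℝ) ≤ (1 - t) ^ (α - 2) + (1 + t) ^ (α - 2) := by
        nlinarith [sq_nonneg ((1 - t) ^ (α - 2) - (1 + t) ^ (α - 2)),
          sq_nonneg ((1 - t) ^ (α - 2) + (1 + t) ^ (α - 2) - 2)]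
      have : (0:ℝ) < 1 - α := by linarith
      nlinarith
  have h0 : G 0 = 0 := by
    simp [hG, Real.one_rpow]
  have := hmono (Set.mem_Ico.mpr ⟨le_refl 0, one_pos⟩) hx hx.1
  rw [h0] at this
  simp only [hG] at this
  linarith

/-- For `α ∈ (0,1)` and `x ∈ [0,1]`, `(1+x)^α + (1-x)^α ≤ 2 - α(1-α)x²`,
where `^` denotes the real power. -/
theorem rpow_add_rpow_le (α x : ℝ) (hα : α ∈ Set.Ioo (0 : ℝ) 1)
    (hx : x ∈ Set.Icc (0 : ℝ) 1) :
    (1 + x) ^ α + (1 - x) ^ α ≤ 2 - α * (1 - α) * x ^ 2 := by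
  obtain ⟨hα0, hα1⟩ := hα
  obtain ⟨hx0, hx1⟩ := hx
  rcases eq_or_lt_of_le hx1 with rfl | hx1
  · -- x = 1
    rw [sub_self, Real.zero_rpow hα0.ne']
    have hb : (1 + 1 : ℝ) ^ α ≤ 1 + α * 1 :=
      rpow_one_add_le_one_add_mul_self (by norm_num) hα0.le hα1.le
    nlinarith [sq_nonneg (1 - α)]
  · set F : ℝ → ℝ := fun t => 2 - α * (1 - α) * t ^ 2 - (1 + t) ^ α - (1 - t) ^ α with hF
    have hder : ∀ t ∈ Set.Ico (0 : ℝ) 1, HasDerivAt F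
        (α * ((1 - t) ^ (α - 1) - (1 + t) ^ (α - 1)) - 2 * α * (1 - α) * t) t := by
      intro t ht
      obtain ⟨ht0, ht1⟩ := ht
      have h1 : (0:ℝ) < 1 - t := by linarith
      have h2 : (0:ℝ) < 1 + t := by linarith
      have d1 := HasDerivAt.rpow_const (p := α) ((hasDerivAt_id t).const_add 1)
        (Or.inl h2.ne')
      have d2 := HasDerivAt.rpow_const (p := α) ((hasDerivAt_id t).const_sub 1)
        (Or.inl h1.ne')
      simp only [id_eq] at d1 d2
      have d3 : HasDerivAt (fun t : ℝ => 2 - α * (1 - α) * t ^ 2)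
          (0 - α * (1 - α) * (2 * t)) t := by
        have : HasDerivAt (fun t : ℝ => t ^ 2) (2 * t) t := by
          simpa using hasDerivAt_pow 2 t
        exact (hasDerivAt_const t 2).sub (this.const_mul (α * (1 - α)))
      have := (d3.sub d1).sub d2
      refine this.congr_deriv ?_
      ring
    have hmono : MonotoneOn F (Set.Ico (0 : ℝ) 1) := by
      apply monotoneOn_of_deriv_nonneg (convex_Ico 0 1)
      · exact fun t ht => (hder t ht).continuousAt.continuousWithinAt
      · intro t ht
        rw [interior_Ico] at ht
        exact ((hder t ⟨ht.1.le, ht.2⟩).differentiableAt).differentiableWithinAt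
      · intro t ht
        rw [interior_Ico] at ht
        obtain ⟨ht0, ht1⟩ := ht
        rw [(hder t ⟨ht0.le, ht1⟩).deriv]
        have key := aux_deriv_ineq α ⟨hα0, hα1⟩ t ⟨ht0.le, ht1⟩
        nlinarith
    have h0 : F 0 = 0 := by
      simp [hF, Real.one_rpow]
      norm_num
    have := hmono (Set.mem_Ico.mpr ⟨le_refl 0, one_pos⟩) ⟨hx0, hx1⟩ hx0
    rw [h0] at this
    simp only [hF] at this
    linarith
end

section
/- Let α ∈ (0,1), let d be an even positive integer, let ε ∈ (0, 1/2], let σ = I/d be the maximally mixed state on ℂ^d, and let ρ be a diagonal density matrix on ℂ^d with d/2 eigenvalues equal to (1−2ε)/d and d/2 eigenvalues equal to (1+2ε)/d. Then tr(ρ^α σ^{1−α}) = ((1+2ε)^α + (1−2ε)^α)/2 ≤ 1 − 2α(1−α)ε². -/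
open Matrix
open scoped ComplexOrder

section MatrixAux

open Polynomial

variable {n : Type*} [Fintype n] [DecidableEq n]

lemma trace_isHermitian_cfc {A : Matrix n n ℂ} (hA : A.IsHermitian) (g : ℝ → ℝ) :
    (hA.cfc g).trace = ∑ i, ((g (hA.eigenvalues i) : ℝ) : ℂ) := by
  rw [Matrix.IsHermitian.cfc, Unitary.conjStarAlgAut_apply, Matrix.trace_mul_cycle,
    Matrix.UnitaryGroup.star_mul_self, one_mul, Matrix.trace_diagonal]
  rfl

lemma charmatrix_diagonal' (w : n → ℂ) :
    charmatrix (Matrix.diagonal w) = Matrix.diagonal (fun i => (X : ℂ[X]) - C (w i)) := by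
  ext i j
  by_cases h : i = j
  · subst h; simp [charmatrix_apply_eq]
  · rw [charmatrix_apply_ne _ _ _ h, Matrix.diagonal_apply_ne _ h,
      Matrix.diagonal_apply_ne _ h, map_zero, neg_zero]

lemma charpoly_diagonal' (w : n → ℂ) :
    (Matrix.diagonal w).charpoly = ∏ i, ((X : ℂ[X]) - C (w i)) := by
  rw [Matrix.charpoly, charmatrix_diagonal', Matrix.det_diagonal]

lemma charpoly_isHermitian {A : Matrix n n ℂ} (hA : A.IsHermitian) :
    A.charpoly = ∏ i, ((X : ℂ[X]) - C ((hA.eigenvalues i : ℂ))) := by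
  set U : Matrix n n ℂ := (hA.eigenvectorUnitary : Matrix n n ℂ) with hUdef
  have h1 : U * star U = 1 := (Matrix.mem_unitaryGroup_iff).mp (hA.eigenvectorUnitary).2
  have h2 : star U * U = 1 := (Matrix.mem_unitaryGroup_iff').mp (hA.eigenvectorUnitary).2
  set φ : Matrix n n ℂ →+* Matrix n n ℂ[X] := (C : ℂ →+* ℂ[X]).mapMatrix with hφdef
  have hUU : φ U * φ (star U) = 1 := by rw [← _root_.map_mul, h1, _root_.map_one]
  have hUU' : φ (star U) * φ U = 1 := by rw [← _root_.map_mul, h2, _root_.map_one]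
  set D : Matrix n n ℂ := Matrix.diagonal (RCLike.ofReal ∘ hA.eigenvalues) with hDdef
  have hcm : charmatrix (U * D * star U) = φ U * charmatrix D * φ (star U) := by
    rw [charmatrix, charmatrix, mul_sub, sub_mul, _root_.map_mul, _root_.map_mul]
    congr 1
    rw [Matrix.scalar_apply, ← Matrix.smul_one_eq_diagonal, Matrix.mul_smul, mul_one,
      Matrix.smul_mul, hUU]
  conv_lhs => rw [Matrix.charpoly, hA.spectral_theorem, Unitary.conjStarAlgAut_apply]
  rw [hcm, Matrix.det_mul, Matrix.det_mul]
  have h3 : (φ (star U)).det * (φ U).det = 1 := by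
    rw [← Matrix.det_mul, hUU', Matrix.det_one]
  have h4 : (φ U).det * (charmatrix D).det * (φ (star U)).det
      = ((φ (star U)).det * (φ U).det) * (charmatrix D).det := by ring
  rw [h4, h3, one_mul, hDdef, charmatrix_diagonal', Matrix.det_diagonal]
  rfl

lemma eig_multiset_diagonal (v : n → ℝ)
    (h : (Matrix.diagonal (fun i => ((v i : ℝ) : ℂ))).IsHermitian) :
    Finset.univ.val.map h.eigenvalues = Finset.univ.val.map v := by
  have h1 : ∏ i, ((X : ℂ[X]) - C ((h.eigenvalues i : ℂ))) = ∏ i, ((X : ℂ[X]) - C ((v i : ℂ))) := by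
    rw [← charpoly_isHermitian h, charpoly_diagonal']
  have key : Finset.univ.val.map (fun i => ((h.eigenvalues i : ℂ)))
      = Finset.univ.val.map (fun i => ((v i : ℂ))) := by
    have h2 := congrArg Polynomial.roots h1
    rwa [Finset.prod_eq_multiset_prod, Finset.prod_eq_multiset_prod,
      show (Finset.univ.val.map fun i => (X : ℂ[X]) - C ((h.eigenvalues i : ℂ)))
          = (Finset.univ.val.map fun i => ((h.eigenvalues i : ℂ))).map (fun r => (X:ℂ[X]) - C r) by
        rw [Multiset.map_map]; rfl,
      show (Finset.univ.val.map fun i => (X : ℂ[X]) - C ((v i : ℂ)))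
          = (Finset.univ.val.map fun i => ((v i : ℂ))).map (fun r => (X:ℂ[X]) - C r) by
        rw [Multiset.map_map]; rfl,
      Polynomial.roots_multiset_prod_X_sub_C, Polynomial.roots_multiset_prod_X_sub_C] at h2
  apply Multiset.map_injective (f := fun x : ℝ => (x : ℂ)) Complex.ofReal_injective
  rwa [Multiset.map_map, Multiset.map_map]

lemma eigenvalues_smul_one (c : ℝ) (h : (((c : ℂ)) • (1 : Matrix n n ℂ)).IsHermitian) (i : n) :
    h.eigenvalues i = c := by
  have hv := h.mulVec_eigenvectorBasis i
  rw [Matrix.smul_mulVec, Matrix.one_mulVec] at hv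
  have hb : ⇑(h.eigenvectorBasis i) ≠ 0 := by
    intro h0
    have : h.eigenvectorBasis i = 0 := by
      apply PiLp.ext
      intro k
      exact congrFun h0 k
    have hn := h.eigenvectorBasis.orthonormal.1 i
    rw [this, norm_zero] at hn
    norm_num at hn
  obtain ⟨k, hk⟩ : ∃ k, (h.eigenvectorBasis i) k ≠ 0 := by
    by_contra hc
    push_neg at hc
    exact hb (funext hc)
  have hk2 := congrFun hv k
  simp only [Pi.smul_apply, smul_eq_mul] at hk2
  have : (c : ℂ) = (h.eigenvalues i : ℂ) := by
    have hk2' : (c : ℂ) * (h.eigenvectorBasis i) k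
        = (h.eigenvalues i : ℂ) * (h.eigenvectorBasis i) k := by
      simpa [Complex.real_smul] using hk2
    exact mul_right_cancel₀ hk hk2'
  exact_mod_cast this.symm

lemma isHermitian_cfc_smul_one (c : ℝ) (h : (((c : ℂ)) • (1 : Matrix n n ℂ)).IsHermitian)
    (g : ℝ → ℝ) : h.cfc g = ((g c : ℝ) : ℂ) • 1 := by
  rw [Matrix.IsHermitian.cfc]
  have h1 : (RCLike.ofReal ∘ g ∘ h.eigenvalues) = fun _ : n => ((g c : ℝ) : ℂ) := by
    funext i
    simp [eigenvalues_smul_one c h i]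
  rw [h1, Unitary.conjStarAlgAut_apply, ← Matrix.smul_one_eq_diagonal, Matrix.mul_smul, mul_one, Matrix.smul_mul,
    (Matrix.mem_unitaryGroup_iff).mp (h.eigenvectorUnitary).2]

lemma matPow_smul_one (c : ℝ) (A : Matrix n n ℂ) (hAc : A = (c : ℂ) • 1) (hc : c ≠ 0) (β : ℝ) :
    matPow A β = ((c ^ β : ℝ) : ℂ) • 1 := by
  subst hAc
  have hherm : (((c : ℂ)) • (1 : Matrix n n ℂ)).IsHermitian := by
    rw [Matrix.IsHermitian, Matrix.conjTranspose_smul, Matrix.conjTranspose_one,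
      Complex.star_def, Complex.conj_ofReal]
  rw [matPow, dif_pos hherm, isHermitian_cfc_smul_one c hherm, if_neg hc]

lemma matPow_diagonal_trace (v : n → ℝ) (β : ℝ) :
    (matPow (Matrix.diagonal (fun i => ((v i : ℝ) : ℂ))) β).trace
      = (((Finset.univ.val.map v).map (fun x : ℝ => if x = 0 then 0 else x ^ β)).sum : ℝ) := by
  have hherm : (Matrix.diagonal (fun i => ((v i : ℝ) : ℂ))).IsHermitian := by
    apply Matrix.isHermitian_diagonal_of_self_adjoint
    funext i
    simp only [Pi.star_apply, Complex.star_def, Complex.conj_ofReal]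
  rw [matPow, dif_pos hherm, trace_isHermitian_cfc, ← Complex.ofReal_sum]
  congr 1
  rw [Finset.sum_eq_multiset_sum]
  conv_rhs => rw [← eig_multiset_diagonal v hherm, Multiset.map_map]
  rfl

end MatrixAux

section AnalysisAux

lemma convex_pt_aux (α t : ℝ) (hα : α < 1) (ht0 : 0 ≤ t) (ht1 : t < 1) :
    2 ≤ (1 - t) ^ (α - 2) + (1 + t) ^ (α - 2) := by
  have h1t : (0:ℝ) < 1 - t := by linarith
  have h1t' : (0:ℝ) < 1 + t := by linarith
  set u := (1 - t) ^ ((α - 2)/2) with hu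
  set v := (1 + t) ^ ((α - 2)/2) with hv
  have husq : u * u = (1 - t) ^ (α - 2) := by
    rw [hu, ← Real.rpow_add h1t]; ring_nf
  have hvsq : v * v = (1 + t) ^ (α - 2) := by
    rw [hv, ← Real.rpow_add h1t']; ring_nf
  have huv : u * v = (1 - t ^ 2) ^ ((α - 2)/2) := by
    rw [hu, hv, ← Real.mul_rpow h1t.le h1t'.le]
    congr 1
    ring
  have h2 : 1 ≤ (1 - t ^ 2) ^ ((α - 2)/2) := by
    apply Real.one_le_rpow_of_pos_of_le_one_of_nonpos
    · nlinarith
    · nlinarith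
    · linarith
  nlinarith [sq_nonneg (u - v)]

lemma bernoulli_aux (α : ℝ) (hα : α ∈ Set.Ioo (0:ℝ) 1) (y : ℝ) (hy : y ∈ Set.Ico (0:ℝ) 1) :
    2 * (1 - α) * y ≤ (1 - y) ^ (α - 1) - (1 + y) ^ (α - 1) := by
  obtain ⟨hy0, hy1⟩ := hy
  set G : ℝ → ℝ := fun t => (1 - t) ^ (α - 1) - (1 + t) ^ (α - 1) - 2 * (1 - α) * t with hG
  have hderiv : ∀ t ∈ Set.Ioo (0:ℝ) y, HasDerivAt G
      ((1 - α) * ((1 - t) ^ (α - 2) + (1 + t) ^ (α - 2) - 2)) t := by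
    intro t ht
    have h1t : (1:ℝ) - t ≠ 0 := by simp only [Set.mem_Ioo] at ht; intro h; nlinarith [ht.1, ht.2]
    have h1t' : (1:ℝ) + t ≠ 0 := by simp only [Set.mem_Ioo] at ht; intro h; nlinarith [ht.1]
    have d1 := HasDerivAt.rpow_const (p := α - 1) ((hasDerivAt_id t).const_sub 1) (Or.inl h1t)
    have d2 := HasDerivAt.rpow_const (p := α - 1) ((hasDerivAt_id t).const_add 1) (Or.inl h1t')
    simp only [id_eq] at d1 d2
    have d3 : HasDerivAt (fun t : ℝ => 2 * (1 - α) * t) (2 * (1 - α)) t := by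
      simpa using (hasDerivAt_id t).const_mul (2 * (1 - α))
    have := (d1.sub d2).sub d3
    refine this.congr_deriv ?_
    ring_nf
  have hmono : MonotoneOn G (Set.Icc 0 y) := by
    apply monotoneOn_of_deriv_nonneg (convex_Icc 0 y)
    · apply ContinuousOn.sub
      apply ContinuousOn.sub
      · apply ContinuousOn.rpow_const (by fun_prop)
        intro t ht
        left
        simp only [Set.mem_Icc] at ht
        intro h; nlinarith [ht.1, ht.2]
      · apply ContinuousOn.rpow_const (by fun_prop)
        intro t ht
        left
        simp only [Set.mem_Icc] at ht
        intro h; nlinarith [ht.1]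
      · fun_prop
    · rw [interior_Icc]
      intro t ht
      exact (hderiv t ht).differentiableAt.differentiableWithinAt
    · rw [interior_Icc]
      intro t ht
      rw [(hderiv t ht).deriv]
      have ht' := ht
      simp only [Set.mem_Ioo] at ht'
      have := convex_pt_aux α t hα.2 ht'.1.le (lt_of_lt_of_le ht'.2 hy1.le)
      nlinarith [hα.2]
  have h0 : G 0 = 0 := by simp [hG]
  have := hmono (Set.mem_Icc.mpr ⟨le_refl 0, hy0⟩) (Set.mem_Icc.mpr ⟨hy0, le_refl y⟩) hy0
  rw [h0] at this
  simp only [hG] at this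
  linarith

lemma key_ineq (α : ℝ) (hα : α ∈ Set.Ioo (0:ℝ) 1) (x : ℝ) (hx0 : 0 ≤ x) (hx1 : x ≤ 1) :
    (1 + x) ^ α + (1 - x) ^ α ≤ 2 - α * (1 - α) * x ^ 2 := by
  set H : ℝ → ℝ := fun t => 2 - α * (1 - α) * t ^ 2 - (1 + t) ^ α - (1 - t) ^ α with hH
  have hderiv : ∀ t ∈ Set.Ioo (0:ℝ) 1, HasDerivAt H
      (α * ((1 - t) ^ (α - 1) - (1 + t) ^ (α - 1) - 2 * (1 - α) * t)) t := by
    intro t ht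
    simp only [Set.mem_Ioo] at ht
    have h1t : (1:ℝ) - t ≠ 0 := by intro h; nlinarith [ht.1, ht.2]
    have h1t' : (1:ℝ) + t ≠ 0 := by intro h; nlinarith [ht.1]
    have d1 := HasDerivAt.rpow_const (p := α) ((hasDerivAt_id t).const_add 1) (Or.inl h1t')
    have d2 := HasDerivAt.rpow_const (p := α) ((hasDerivAt_id t).const_sub 1) (Or.inl h1t)
    simp only [id_eq] at d1 d2
    have d0 : HasDerivAt (fun t : ℝ => 2 - α * (1 - α) * t ^ 2) (-(α * (1 - α) * (2 * t))) t := by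
      have : HasDerivAt (fun t : ℝ => t ^ 2) (2 * t) t := by
        simpa using (hasDerivAt_pow 2 t)
      simpa using ((this.const_mul (α * (1 - α))).const_sub 2)
    have := (d0.sub d1).sub d2
    refine this.congr_deriv ?_
    ring_nf
  have hmono : MonotoneOn H (Set.Icc 0 1) := by
    apply monotoneOn_of_deriv_nonneg (convex_Icc 0 1)
    · apply ContinuousOn.sub
      apply ContinuousOn.sub
      · fun_prop
      · exact ContinuousOn.rpow_const (by fun_prop) (fun t _ => Or.inr hα.1.le)
      · exact ContinuousOn.rpow_const (by fun_prop) (fun t _ => Or.inr hα.1.le)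
    · rw [interior_Icc]
      intro t ht
      exact (hderiv t ht).differentiableAt.differentiableWithinAt
    · rw [interior_Icc]
      intro t ht
      rw [(hderiv t ht).deriv]
      have ht' := ht
      simp only [Set.mem_Ioo] at ht'
      have := bernoulli_aux α hα t (Set.mem_Ico.mpr ⟨ht'.1.le, ht'.2⟩)
      nlinarith [hα.1]
  have h0 : H 0 = 0 := by simp [hH]; norm_num
  have := hmono (Set.mem_Icc.mpr ⟨le_refl 0, zero_le_one⟩) (Set.mem_Icc.mpr ⟨hx0, hx1⟩) hx0
  rw [h0] at this
  simp only [hH] at this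
  linarith

end AnalysisAux

/-- Let `σ = I/d` be the maximally mixed state and `ρ` a diagonal density matrix with
`d/2` diagonal entries equal to `(1-2ε)/d` and `d/2` equal to `(1+2ε)/d`. Then
`tr(ρ^α σ^{1-α}) = ((1+2ε)^α + (1-2ε)^α)/2 ≤ 1 - 2α(1-α)ε²`. -/
theorem trace_pow_mixed_eq_and_le {d : ℕ} (hd : 0 < d) (hdeven : Even d)
    (α ε : ℝ) (hα : α ∈ Set.Ioo (0 : ℝ) 1) (hε : ε ∈ Set.Ioc (0 : ℝ) (1 / 2))
    (f : Fin d → ℝ)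
    (hf : (Finset.univ.val.map f)
        = Multiset.replicate (d / 2) ((1 - 2 * ε) / d)
          + Multiset.replicate (d / 2) ((1 + 2 * ε) / d))
    (ρ : Matrix (Fin d) (Fin d) ℂ) (hρ : ρ = Matrix.diagonal (fun i => ((f i : ℝ) : ℂ)))
    (σ : Matrix (Fin d) (Fin d) ℂ) (hσ : σ = ((d : ℂ))⁻¹ • (1 : Matrix (Fin d) (Fin d) ℂ)) :
    ((matPow ρ α * matPow σ (1 - α)).trace).re
        = ((1 + 2 * ε) ^ α + (1 - 2 * ε) ^ α) / 2 ∧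
      ((1 + 2 * ε) ^ α + (1 - 2 * ε) ^ α) / 2 ≤ 1 - 2 * α * (1 - α) * ε ^ 2 := by
  subst hρ hσ
  have hd0 : (0:ℝ) < d := by exact_mod_cast hd
  have hε0 := hε.1
  have hε2 : 2 * ε ≤ 1 := by linarith [hε.2]
  constructor
  · -- the trace computation
    have hc : ((d:ℝ))⁻¹ ≠ 0 := inv_ne_zero (ne_of_gt hd0)
    have hσpow : matPow ((d : ℂ)⁻¹ • (1 : Matrix (Fin d) (Fin d) ℂ)) (1 - α)
        = ((((d:ℝ)⁻¹) ^ (1 - α) : ℝ) : ℂ) • 1 := by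
      apply matPow_smul_one ((d:ℝ)⁻¹) _ _ hc
      rw [show ((((d:ℝ)⁻¹ : ℝ)) : ℂ) = ((d:ℂ))⁻¹ by push_cast; ring]
    rw [hσpow, Matrix.mul_smul, mul_one, Matrix.trace_smul, matPow_diagonal_trace, hf]
    set g : ℝ → ℝ := fun x => if x = 0 then 0 else x ^ α with hg
    have hgnn : ∀ x : ℝ, 0 ≤ x → g x = x ^ α := by
      intro x hx
      rcases eq_or_lt_of_le hx with h | h
      · rw [hg, ← h]
        simp [Real.zero_rpow (ne_of_gt hα.1)]
      · rw [hg]; simp only [if_neg (ne_of_gt h)]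
    rw [Multiset.map_add, Multiset.map_replicate, Multiset.map_replicate, Multiset.sum_add,
      Multiset.sum_replicate, Multiset.sum_replicate]
    obtain ⟨k, hk⟩ := hdeven
    have hdk : d = 2 * k := by omega
    have hd2 : d / 2 = k := by omega
    have hk0 : 0 < k := by omega
    rw [hd2, hgnn _ (div_nonneg (by linarith) hd0.le),
      hgnn _ (div_nonneg (by linarith) hd0.le)]
    have e1 : ((1 - 2*ε)/(d:ℝ)) ^ α = (1 - 2*ε) ^ α / (d:ℝ) ^ α :=
      Real.div_rpow (by linarith) hd0.le α
    have e2 : ((1 + 2*ε)/(d:ℝ)) ^ α = (1 + 2*ε) ^ α / (d:ℝ) ^ α :=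
      Real.div_rpow (by linarith) hd0.le α
    have e3 : ((d:ℝ)⁻¹) ^ (1 - α) = ((d:ℝ) ^ ((1:ℝ) - α))⁻¹ := Real.inv_rpow hd0.le _
    have e4 : (d:ℝ) ^ ((1:ℝ) - α) * (d:ℝ) ^ α = d := by
      rw [← Real.rpow_add hd0]
      norm_num
    have hXpos : (0:ℝ) < (d:ℝ) ^ α := Real.rpow_pos_of_pos hd0 _
    have hYpos : (0:ℝ) < (d:ℝ) ^ ((1:ℝ) - α) := Real.rpow_pos_of_pos hd0 _
    simp only [nsmul_eq_mul]
    rw [smul_eq_mul, ← Complex.ofReal_mul, Complex.ofReal_re]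
    rw [e1, e2, e3]
    have hkd : (k:ℝ) * 2 = d := by
      rw [hdk]; push_cast; ring
    field_simp
    linear_combination ((1 + 2*ε) ^ α + (1 - 2*ε) ^ α) * hkd
      - ((1 + 2*ε) ^ α + (1 - 2*ε) ^ α) * e4
  · -- the inequality
    have := key_ineq α hα (2 * ε) (by linarith) hε2
    nlinarith [this]
end

section
/- Let α ∈ (0,1) and let ρ, σ be density matrices of the same size. Then the α-affinity satisfies 0 ≤ tr(ρ^α σ^{1−α}) ≤ 1, and tr(ρ^α σ^{1−α}) = 1 if and only if ρ = σ. -/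
open Matrix
open scoped ComplexOrder

open Real in
private lemma young_strict' {α a b : ℝ} (hα1 : 0 < α) (hα2 : α < 1)
    (ha : 0 ≤ a) (hb : 0 ≤ b) (hab : a ≠ b) :
    a ^ α * b ^ (1 - α) < α * a + (1 - α) * b := by
  rcases eq_or_lt_of_le ha with h0 | ha'
  · have hb' : 0 < b := lt_of_le_of_ne hb (by simpa [← h0] using hab)
    rw [← h0, Real.zero_rpow hα1.ne', zero_mul]
    simpa using mul_pos (by linarith : (0:ℝ) < 1 - α) hb'
  rcases eq_or_lt_of_le hb with h0 | hb'
  · rw [← h0, Real.zero_rpow (by linarith : (1:ℝ) - α ≠ 0), mul_zero]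
    simpa using mul_pos hα1 ha'
  have := strictConcaveOn_log_Ioi.2 (Set.mem_Ioi.2 ha') (Set.mem_Ioi.2 hb') hab
    hα1 (by linarith : (0:ℝ) < 1 - α) (by ring : α + (1 - α) = 1)
  calc a ^ α * b ^ (1 - α) = Real.exp (α * Real.log a + (1 - α) * Real.log b) := by
        rw [Real.exp_add, Real.rpow_def_of_pos ha', Real.rpow_def_of_pos hb',
          mul_comm (Real.log a), mul_comm (Real.log b)]
    _ < Real.exp (Real.log (α * a + (1 - α) * b)) := by
        apply Real.exp_lt_exp.2
        simpa [smul_eq_mul] using this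
    _ = α * a + (1 - α) * b := Real.exp_log (add_pos (mul_pos hα1 ha') (mul_pos (by linarith) hb'))

private lemma rpow_self_mul {a α : ℝ} (ha : 0 ≤ a) (h1 : α + (1 - α) ≠ 0) :
    a ^ α * a ^ (1 - α) = a := by
  rw [← Real.rpow_add' ha h1]
  norm_num

/-- The α-affinity `tr(ρ^α σ^{1-α})` of density matrices satisfies `0 ≤ A_α(ρ,σ) ≤ 1`,
with equality `A_α(ρ,σ) = 1` if and only if `ρ = σ`. -/
theorem affinity_nonneg_le_one_eq_iff {n : Type*} [Fintype n] [DecidableEq n]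
    (α : ℝ) (hα : α ∈ Set.Ioo (0 : ℝ) 1)
    (ρ σ : Matrix n n ℂ) (hρ : ρ.PosSemidef) (hρ1 : ρ.trace = 1)
    (hσ : σ.PosSemidef) (hσ1 : σ.trace = 1) :
    0 ≤ ((matPow ρ α * matPow σ (1 - α)).trace).re ∧
      ((matPow ρ α * matPow σ (1 - α)).trace).re ≤ 1 ∧
      (((matPow ρ α * matPow σ (1 - α)).trace).re = 1 ↔ ρ = σ) := by
  obtain ⟨hα1, hα2⟩ := hα
  set U : Matrix n n ℂ := (Matrix.IsHermitian.eigenvectorUnitary hρ.1 : Matrix n n ℂ) with hUdef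
  set V : Matrix n n ℂ := (Matrix.IsHermitian.eigenvectorUnitary hσ.1 : Matrix n n ℂ) with hVdef
  set a : n → ℝ := hρ.1.eigenvalues with hadef
  set b : n → ℝ := hσ.1.eigenvalues with hbdef
  have ha : ∀ i, 0 ≤ a i := hρ.eigenvalues_nonneg
  have hb : ∀ i, 0 ≤ b i := hσ.eigenvalues_nonneg
  set W : Matrix n n ℂ := star U * V with hWdef
  set c : n → n → ℝ := fun i k => Complex.normSq (W i k) with hcdef
  set fa : n → ℝ := fun i => a i ^ α with hfadef
  set gb : n → ℝ := fun k => b k ^ (1 - α) with hgbdef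
  have hUU : star U * U = 1 :=
    mem_unitaryGroup_iff'.mp (Matrix.IsHermitian.eigenvectorUnitary hρ.1).2
  have hUU' : U * star U = 1 :=
    mem_unitaryGroup_iff.mp (Matrix.IsHermitian.eigenvectorUnitary hρ.1).2
  have hVV : star V * V = 1 :=
    mem_unitaryGroup_iff'.mp (Matrix.IsHermitian.eigenvectorUnitary hσ.1).2
  have hVV' : V * star V = 1 :=
    mem_unitaryGroup_iff.mp (Matrix.IsHermitian.eigenvectorUnitary hσ.1).2
  have hsW : star W = star V * U := by rw [hWdef, Matrix.star_mul, star_star]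
  have hWW' : W * star W = 1 := by
    rw [hsW, hWdef, Matrix.mul_assoc, ← Matrix.mul_assoc V, hVV', Matrix.one_mul, hUU]
  have hWW : star W * W = 1 := by
    rw [hsW, hWdef, Matrix.mul_assoc, ← Matrix.mul_assoc U, hUU', Matrix.one_mul, hVV]
  have hVW : V = U * W := by
    rw [hWdef, ← Matrix.mul_assoc, hUU', Matrix.one_mul]
  -- spectral decompositions
  have hρdec : ρ = U * Matrix.diagonal (fun i => ((a i : ℝ) : ℂ)) * star U := by
    simpa [Function.comp_def] using hρ.1.spectral_theorem
  have hσdec : σ = V * Matrix.diagonal (fun i => ((b i : ℝ) : ℂ)) * star V := by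
    simpa [Function.comp_def] using hσ.1.spectral_theorem
  -- matPow formulas
  have hMa : matPow ρ α = U * Matrix.diagonal (fun i => ((fa i : ℝ) : ℂ)) * star U := by
    rw [matPow, dif_pos hρ.1, Matrix.IsHermitian.cfc, Unitary.conjStarAlgAut_apply]
    refine congrArg₂ HMul.hMul (congrArg₂ HMul.hMul rfl
      (congrArg Matrix.diagonal (funext fun i => ?_))) rfl
    show (RCLike.ofReal (if a i = 0 then 0 else a i ^ α) : ℂ) = ((fa i : ℝ) : ℂ)
    by_cases h : a i = 0
    · simp [h, hfadef, Real.zero_rpow hα1.ne']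
    · simp [h, hfadef]
  have hMb : matPow σ (1 - α) = V * Matrix.diagonal (fun k => ((gb k : ℝ) : ℂ)) * star V := by
    rw [matPow, dif_pos hσ.1, Matrix.IsHermitian.cfc, Unitary.conjStarAlgAut_apply]
    refine congrArg₂ HMul.hMul (congrArg₂ HMul.hMul rfl
      (congrArg Matrix.diagonal (funext fun k => ?_))) rfl
    show (RCLike.ofReal (if b k = 0 then 0 else b k ^ (1 - α)) : ℂ) = ((gb k : ℝ) : ℂ)
    by_cases h : b k = 0
    · simp [h, hgbdef, Real.zero_rpow (by linarith : (1:ℝ) - α ≠ 0)]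
    · simp [h, hgbdef]
  -- sums of eigenvalues
  have hsuma : ∑ i, a i = 1 := by
    have h : ρ.trace = ∑ i, ((a i : ℝ) : ℂ) := by
      rw [hρdec, Matrix.trace_mul_cycle, hUU, Matrix.one_mul, Matrix.trace_diagonal]
    rw [hρ1] at h
    exact_mod_cast h.symm
  have hsumb : ∑ i, b i = 1 := by
    have h : σ.trace = ∑ i, ((b i : ℝ) : ℂ) := by
      rw [hσdec, Matrix.trace_mul_cycle, hVV, Matrix.one_mul, Matrix.trace_diagonal]
    rw [hσ1] at h
    exact_mod_cast h.symm
  -- row and column sums of c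
  have hrow : ∀ i, ∑ k, c i k = 1 := by
    intro i
    have h : (W * star W) i i = (1 : Matrix n n ℂ) i i := by rw [hWW']
    simp only [Matrix.mul_apply, Matrix.star_apply, Matrix.one_apply_eq] at h
    have h2 : ∑ k, ((c i k : ℝ) : ℂ) = 1 := by
      rw [← h]
      refine Finset.sum_congr rfl fun k _ => ?_
      simp [hcdef, Complex.star_def, Complex.mul_conj]
    exact_mod_cast h2
  have hcol : ∀ k, ∑ i, c i k = 1 := by
    intro k
    have h : (star W * W) k k = (1 : Matrix n n ℂ) k k := by rw [hWW]
    simp only [Matrix.mul_apply, Matrix.star_apply, Matrix.one_apply_eq] at h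
    have h2 : ∑ i, ((c i k : ℝ) : ℂ) = 1 := by
      rw [← h]
      refine Finset.sum_congr rfl fun i _ => ?_
      rw [mul_comm]
      simp [hcdef, Complex.star_def, Complex.mul_conj]
    exact_mod_cast h2
  have hc0 : ∀ i k, 0 ≤ c i k := fun i k => Complex.normSq_nonneg _
  -- the trace formula
  set S : ℝ := ∑ i, ∑ k, fa i * gb k * c i k with hSdef
  have htr : (matPow ρ α * matPow σ (1 - α)).trace = ((S : ℝ) : ℂ) := by
    have hMN : matPow ρ α * matPow σ (1 - α) =
        U * (Matrix.diagonal (fun i => ((fa i : ℝ) : ℂ)) * W *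
          Matrix.diagonal (fun k => ((gb k : ℝ) : ℂ)) * star W) * star U := by
      rw [hMa, hMb, hVW, Matrix.star_mul]
      simp only [Matrix.mul_assoc]
      rw [← Matrix.mul_assoc (star U) U, hUU, Matrix.one_mul]
    rw [hMN, Matrix.trace_mul_cycle, ← Matrix.mul_assoc, hUU, Matrix.one_mul]
    rw [hSdef]
    push_cast
    rw [Matrix.trace]
    refine Finset.sum_congr rfl fun i _ => ?_
    rw [Matrix.diag_apply, Matrix.mul_apply]
    refine Finset.sum_congr rfl fun k _ => ?_
    rw [Matrix.mul_diagonal, Matrix.diagonal_mul, Matrix.star_apply]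
    have hck : ((c i k : ℝ) : ℂ) = W i k * star (W i k) := by
      simp [hcdef, Complex.star_def, Complex.mul_conj]
    rw [hck]
    ring
  have hre : ((matPow ρ α * matPow σ (1 - α)).trace).re = S := by
    rw [htr]; exact Complex.ofReal_re S
  -- nonnegativity
  have hS0 : 0 ≤ S := by
    rw [hSdef]
    refine Finset.sum_nonneg fun i _ => Finset.sum_nonneg fun k _ => ?_
    exact mul_nonneg (mul_nonneg (Real.rpow_nonneg (ha i) _) (Real.rpow_nonneg (hb k) _)) (hc0 i k)
  -- the doubly-stochastic sums
  have hA : ∑ i, ∑ k, a i * c i k = 1 := by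
    have h : ∀ i, ∑ k, a i * c i k = a i := fun i => by rw [← Finset.mul_sum, hrow, mul_one]
    simp only [h]; exact hsuma
  have hB : ∑ i, ∑ k, b k * c i k = 1 := by
    rw [Finset.sum_comm]
    have h : ∀ k, ∑ i, b k * c i k = b k := fun k => by rw [← Finset.mul_sum, hcol, mul_one]
    simp only [h]; exact hsumb
  have hbound : ∑ i, ∑ k, (α * a i + (1 - α) * b k) * c i k = 1 := by
    calc ∑ i, ∑ k, (α * a i + (1 - α) * b k) * c i k
        = α * (∑ i, ∑ k, a i * c i k) + (1 - α) * (∑ i, ∑ k, b k * c i k) := by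
          rw [Finset.mul_sum, Finset.mul_sum, ← Finset.sum_add_distrib]
          refine Finset.sum_congr rfl fun i _ => ?_
          rw [Finset.mul_sum, Finset.mul_sum, ← Finset.sum_add_distrib]
          exact Finset.sum_congr rfl fun k _ => by ring
      _ = 1 := by rw [hA, hB]; ring
  have hterm : ∀ i k, fa i * gb k * c i k ≤ (α * a i + (1 - α) * b k) * c i k := fun i k =>
    mul_le_mul_of_nonneg_right
      (Real.geom_mean_le_arith_mean2_weighted hα1.le (by linarith) (ha i) (hb k) (by ring))
      (hc0 i k)
  have hSle : S ≤ 1 := by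
    calc S ≤ ∑ i, ∑ k, (α * a i + (1 - α) * b k) * c i k :=
          Finset.sum_le_sum fun i _ => Finset.sum_le_sum fun k _ => hterm i k
      _ = 1 := hbound
  -- equality conditions
  have hP_of_S : S = 1 → ∀ i k, c i k ≠ 0 → a i = b k := by
    intro hS1 i k hcik
    by_contra hne
    have hstrict : fa i * gb k * c i k < (α * a i + (1 - α) * b k) * c i k :=
      mul_lt_mul_of_pos_right (young_strict' hα1 hα2 (ha i) (hb k) hne)
        (lt_of_le_of_ne (hc0 i k) (Ne.symm hcik))
    have hlt : S < 1 := by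
      rw [← hbound, hSdef]
      refine Finset.sum_lt_sum (fun i' _ => Finset.sum_le_sum fun k' _ => hterm i' k')
        ⟨i, Finset.mem_univ i, ?_⟩
      exact Finset.sum_lt_sum (fun k' _ => hterm i k') ⟨k, Finset.mem_univ k, hstrict⟩
    exact absurd hS1 hlt.ne
  have hS_of_P : (∀ i k, c i k ≠ 0 → a i = b k) → S = 1 := by
    intro hP
    have h : ∀ i k, fa i * gb k * c i k = a i * c i k := by
      intro i k
      by_cases hc : c i k = 0
      · rw [hc, mul_zero, mul_zero]
      · have hab := hP i k hc
        show a i ^ α * b k ^ (1 - α) * c i k = a i * c i k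
        rw [← hab, rpow_self_mul (ha i) (by norm_num)]
    rw [hSdef]
    simp only [h]
    exact hA
  -- P ↔ ρ = σ
  have heq_of_P : (∀ i k, c i k ≠ 0 → a i = b k) → ρ = σ := by
    intro hP
    have hDW : Matrix.diagonal (fun i => ((a i : ℝ) : ℂ)) * W
        = W * Matrix.diagonal (fun k => ((b k : ℝ) : ℂ)) := by
      ext i k
      rw [Matrix.diagonal_mul, Matrix.mul_diagonal]
      by_cases h : W i k = 0
      · rw [h]; ring
      · have hcne : c i k ≠ 0 := by
          simp only [hcdef]
          exact fun h0 => h (Complex.normSq_eq_zero.mp h0)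
        rw [hP i k hcne]; ring
    have hmid : W * Matrix.diagonal (fun k => ((b k : ℝ) : ℂ)) * star W
        = Matrix.diagonal (fun i => ((a i : ℝ) : ℂ)) := by
      rw [← hDW, Matrix.mul_assoc, hWW', Matrix.mul_one]
    rw [hρdec, hσdec, hVW, Matrix.star_mul, ← hmid]
    simp only [Matrix.mul_assoc]
  have hP_of_eq : ρ = σ → (∀ i k, c i k ≠ 0 → a i = b k) := by
    intro hEq i k hcik
    have hDa : Matrix.diagonal (fun i => ((a i : ℝ) : ℂ)) = star U * ρ * U := by
      rw [hρdec]
      simp only [Matrix.mul_assoc]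
      rw [hUU, Matrix.mul_one, ← Matrix.mul_assoc, hUU, Matrix.one_mul]
    have hDb : Matrix.diagonal (fun k => ((b k : ℝ) : ℂ)) = star V * σ * V := by
      rw [hσdec]
      simp only [Matrix.mul_assoc]
      rw [hVV, Matrix.mul_one, ← Matrix.mul_assoc, hVV, Matrix.one_mul]
    have hDW : Matrix.diagonal (fun i => ((a i : ℝ) : ℂ)) * W
        = W * Matrix.diagonal (fun k => ((b k : ℝ) : ℂ)) := by
      rw [hDa, hDb, hEq, hWdef]
      simp only [Matrix.mul_assoc]
      rw [← Matrix.mul_assoc U (star U), hUU', Matrix.one_mul,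
        ← Matrix.mul_assoc V (star V), hVV', Matrix.one_mul]
    have hW0 : W i k ≠ 0 := by
      intro h0
      apply hcik
      simp [hcdef, h0]
    have h := Matrix.ext_iff.mpr hDW i k
    rw [Matrix.diagonal_mul, Matrix.mul_diagonal,
      mul_comm ((a i : ℝ) : ℂ) (W i k)] at h
    have h2 : ((a i : ℝ) : ℂ) = ((b k : ℝ) : ℂ) := mul_left_cancel₀ hW0 h
    exact_mod_cast h2
  refine ⟨by rw [hre]; exact hS0, by rw [hre]; exact hSle, ?_⟩
  rw [hre]
  exact ⟨fun h => heq_of_P (hP_of_S h), fun h => hS_of_P (hP_of_eq h)⟩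
end
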